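/- arXiv:1305.0257 — 10 statements merged into one kernel-verified Lean document; each statement's English description precedes it below -/
import Mathlib

section
/- The set S = span{ |j⟩|k+1⟩ − |j+1⟩|k⟩ : 0 ≤ j ≤ m−2, 0 ≤ k ≤ n−2 } is a linear subspace of ℂ^m ⊗ ℂ^n of dimension (m−1)(n−1). -/
open Matrix Complex Finset

/-- The subspace `S = span{ |j⟩|k+1⟩ − |j+1⟩|k⟩ }` of `ℂ^m ⊗ ℂ^n ≅ ℂ^(mn)`. -/
noncomputable def entSub (m n : ℕ) : Submodule ℂ (Fin m × Fin n → ℂ) :=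
  Submodule.span ℂ {x | ∃ (j k : ℕ) (hj : j + 1 < m) (hk : k + 1 < n),
    x = Pi.single ((⟨j, by omega⟩ : Fin m), (⟨k + 1, hk⟩ : Fin n)) (1 : ℂ)
      - Pi.single ((⟨j + 1, hj⟩ : Fin m), (⟨k, by omega⟩ : Fin n)) (1 : ℂ)}

/-- The generating family, indexed by `Fin (m-1) × Fin (n-1)`. -/
noncomputable def entFam (m n : ℕ) (p : Fin (m - 1) × Fin (n - 1)) : Fin m × Fin n → ℂ :=
  Pi.single ((⟨p.1.val, by omega⟩ : Fin m), (⟨p.2.val + 1, by omega⟩ : Fin n)) (1 : ℂ)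
    - Pi.single ((⟨p.1.val + 1, by omega⟩ : Fin m), (⟨p.2.val, by omega⟩ : Fin n)) (1 : ℂ)

/-- A left inverse (on the family) linear map. -/
noncomputable def entT (m n : ℕ) : (Fin m × Fin n → ℂ) →ₗ[ℂ] (Fin (m - 1) × Fin (n - 1) → ℂ) :=
  Matrix.mulVecLin (Matrix.of fun pq ab =>
    if pq.1.val < ab.1.val ∧ pq.1.val + pq.2.val + 1 = ab.1.val + ab.2.val then (-1 : ℂ) else 0)

lemma entT_entFam (m n : ℕ) (p : Fin (m - 1) × Fin (n - 1)) :
    entT m n (entFam m n p) = Pi.single p 1 := by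
  obtain ⟨⟨j, hj⟩, ⟨k, hk⟩⟩ := p
  funext q
  obtain ⟨⟨a, ha⟩, ⟨b, hb⟩⟩ := q
  simp only [entT, entFam, map_sub, Matrix.mulVecLin_apply, Matrix.mulVec_single, Matrix.of_apply,
    Pi.sub_apply, Pi.single_apply, Prod.mk.injEq, Fin.mk.injEq, mul_one, Prod.ext_iff, Fin.ext_iff]
  split_ifs <;> norm_num <;> split_ifs <;> norm_num <;> omega

lemma entFam_linearIndependent (m n : ℕ) : LinearIndependent ℂ (entFam m n) := by
  apply LinearIndependent.of_comp (entT m n)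
  have : (entT m n) ∘ entFam m n = fun p => Pi.single p (1 : ℂ) := by
    funext p; exact entT_entFam m n p
  rw [this]
  have h := (Pi.basisFun ℂ (Fin (m - 1) × Fin (n - 1))).linearIndependent
  have he : ⇑(Pi.basisFun ℂ (Fin (m - 1) × Fin (n - 1))) = fun p => Pi.single p (1 : ℂ) :=
    funext fun p => Pi.basisFun_apply ℂ _ p
  rwa [he] at h

lemma entSub_eq_span (m n : ℕ) :
    entSub m n = Submodule.span ℂ (Set.range (entFam m n)) := by
  unfold entSub
  congr 1
  ext x
  constructor
  · rintro ⟨j, k, hj, hk, rfl⟩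
    exact ⟨(⟨j, by omega⟩, ⟨k, by omega⟩), rfl⟩
  · rintro ⟨⟨⟨j, hj⟩, ⟨k, hk⟩⟩, rfl⟩
    exact ⟨j, k, by omega, by omega, rfl⟩

theorem stmt_0 (m n : ℕ) (hm : 1 ≤ m) (hn : 1 ≤ n) :
    Module.finrank ℂ (entSub m n) = (m - 1) * (n - 1) := by
  rw [entSub_eq_span, finrank_span_eq_card (entFam_linearIndependent m n)]
  simp [Fintype.card_prod]
end

section
/- Every nonzero vector in the subspace S = span{ |j⟩|k+1⟩ − |j+1⟩|k⟩ : 0 ≤ j ≤ m−2, 0 ≤ k ≤ n−2 } of ℂ^m ⊗ ℂ^n is entangled, i.e., cannot be written as a tensor product v ⊗ w with v ∈ ℂ^m and w ∈ ℂ^n. -/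
open Matrix Complex Finset

lemma single_sum (m n : ℕ) (q : Fin m × Fin n) (s : ℕ) :
    ∑ p : Fin m × Fin n, (if (p.1 : ℕ) + (p.2 : ℕ) = s then Pi.single q (1:ℂ) p else 0)
      = if (q.1 : ℕ) + (q.2 : ℕ) = s then 1 else 0 := by
  rw [Finset.sum_eq_single q]
  · simp
  · intro p _ hpq
    simp [Pi.single_apply, hpq]
  · simp

lemma gen_sum (m n : ℕ) (q r : Fin m × Fin n)
    (h : (q.1 : ℕ) + (q.2 : ℕ) = (r.1 : ℕ) + (r.2 : ℕ)) (s : ℕ) :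
    ∑ p : Fin m × Fin n,
      (if (p.1 : ℕ) + (p.2 : ℕ) = s then ((Pi.single q (1:ℂ) - Pi.single r (1:ℂ) : Fin m × Fin n → ℂ)) p else 0) = 0 := by
  have h1 : ∀ p : Fin m × Fin n,
      (if (p.1 : ℕ) + (p.2 : ℕ) = s then ((Pi.single q (1:ℂ) - Pi.single r (1:ℂ) : Fin m × Fin n → ℂ)) p else 0)
      = (if (p.1 : ℕ) + (p.2 : ℕ) = s then (Pi.single q (1:ℂ) : Fin m × Fin n → ℂ) p else 0)
        - (if (p.1 : ℕ) + (p.2 : ℕ) = s then (Pi.single r (1:ℂ) : Fin m × Fin n → ℂ) p else 0) := by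
    intro p; simp only [Pi.sub_apply]; split <;> simp
  rw [Finset.sum_congr rfl fun p _ => h1 p, Finset.sum_sub_distrib,
    single_sum, single_sum, h, sub_self]

lemma antidiag_zero (m n : ℕ) (x : Fin m × Fin n → ℂ) (hx : x ∈ entSub m n) (s : ℕ) :
    ∑ p : Fin m × Fin n, (if (p.1 : ℕ) + (p.2 : ℕ) = s then x p else 0) = 0 := by
  induction hx using Submodule.span_induction with
  | mem x hx =>
    obtain ⟨j, k, hj, hk, rfl⟩ := hx
    exact gen_sum m n _ _ (by simp; omega) s
  | zero => simp
  | add x y _ _ hx hy =>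
    have h1 : ∀ p : Fin m × Fin n,
        (if (p.1 : ℕ) + (p.2 : ℕ) = s then (x + y) p else 0)
        = (if (p.1 : ℕ) + (p.2 : ℕ) = s then x p else 0)
          + (if (p.1 : ℕ) + (p.2 : ℕ) = s then y p else 0) := by
      intro p; simp only [Pi.add_apply]; split <;> simp
    rw [Finset.sum_congr rfl fun p _ => h1 p, Finset.sum_add_distrib, hx, hy, add_zero]
  | smul c x _ hx =>
    have h1 : ∀ p : Fin m × Fin n,
        (if (p.1 : ℕ) + (p.2 : ℕ) = s then (c • x) p else 0)
        = c * (if (p.1 : ℕ) + (p.2 : ℕ) = s then x p else 0) := by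
      intro p; simp only [Pi.smul_apply, smul_eq_mul]; split <;> simp
    rw [Finset.sum_congr rfl fun p _ => h1 p, ← Finset.mul_sum, hx, mul_zero]

theorem stmt_3 (m n : ℕ) (hm : 2 ≤ m) (hn : 2 ≤ n)
    (v : Fin m × Fin n → ℂ) (hv : v ∈ entSub m n) (hv0 : v ≠ 0) :
    ¬ ∃ (a : Fin m → ℂ) (b : Fin n → ℂ), v = fun p => a p.1 * b p.2 := by
  rintro ⟨a, b, rfl⟩
  set pa : Polynomial ℂ := ∑ j : Fin m, Polynomial.C (a j) * Polynomial.X ^ (j : ℕ) with hpa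
  set pb : Polynomial ℂ := ∑ k : Fin n, Polynomial.C (b k) * Polynomial.X ^ (k : ℕ) with hpb
  have hcoeff : ∀ s, (pa * pb).coeff s =
      ∑ p : Fin m × Fin n, (if (p.1 : ℕ) + (p.2 : ℕ) = s then a p.1 * b p.2 else 0) := by
    intro s
    rw [hpa, hpb, Finset.sum_mul_sum]
    rw [Polynomial.finset_sum_coeff]
    rw [Fintype.sum_prod_type]
    congr 1; funext j
    rw [Polynomial.finset_sum_coeff]
    congr 1; funext k
    have : Polynomial.C (a j) * Polynomial.X ^ (j:ℕ) * (Polynomial.C (b k) * Polynomial.X ^ (k:ℕ))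
      = Polynomial.C (a j * b k) * Polynomial.X ^ ((j:ℕ)+(k:ℕ)) := by rw [Polynomial.C_mul, pow_add]; ring
    rw [this, Polynomial.coeff_C_mul, Polynomial.coeff_X_pow]
    simp [eq_comm]
  have hmul : pa * pb = 0 := by
    ext s
    rw [hcoeff s]
    simpa using antidiag_zero m n _ hv s
  have hcoeffa : ∀ j : Fin m, pa.coeff (j : ℕ) = a j := by
    intro j
    rw [hpa, Polynomial.finset_sum_coeff]
    rw [Finset.sum_eq_single j]
    · simp
    · intro j' _ hjj
      rw [Polynomial.coeff_C_mul, Polynomial.coeff_X_pow]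
      simp [Fin.val_ne_of_ne hjj, (Fin.val_ne_of_ne hjj).symm]
    · simp
  have hcoeffb : ∀ k : Fin n, pb.coeff (k : ℕ) = b k := by
    intro k
    rw [hpb, Polynomial.finset_sum_coeff]
    rw [Finset.sum_eq_single k]
    · simp
    · intro k' _ hkk
      rw [Polynomial.coeff_C_mul, Polynomial.coeff_X_pow]
      simp [Fin.val_ne_of_ne hkk, (Fin.val_ne_of_ne hkk).symm]
    · simp
  rcases mul_eq_zero.mp hmul with h | h
  · apply hv0; funext p
    have := hcoeffa p.1
    rw [h] at this
    simp [← this]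
  · apply hv0; funext p
    have := hcoeffb p.2
    rw [h] at this
    simp [← this]
end

section
/- Let {A_i} be a finite family of n×m complex matrices, each with all anti-diagonals summing to zero, not all zero, and let p_i > 0. Then there exist indices j₀ < j₁ (columns) and k₀ < k₁ (rows) such that (A_i)_{k₀,j₀} = 0 for all i and Σ_i p_i · conj((A_i)_{k₁,j₀}) · (A_i)_{k₀,j₁} ≠ 0. -/
open Matrix Complex Finset

theorem stmt_4 (m n : ℕ) {ι : Type*} [Fintype ι]
    (A : ι → Matrix (Fin n) (Fin m) ℂ) (p : ι → ℝ)
    (hp : ∀ i, 0 < p i)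
    (hA : ∀ i, ∀ s : ℕ, ∑ j : Fin m, ∑ k : Fin n,
      (if (j : ℕ) + (k : ℕ) = s then A i k j else 0) = 0)
    (hnz : ∃ i, A i ≠ 0) :
    ∃ (j₀ j₁ : Fin m) (k₀ k₁ : Fin n), j₀ < j₁ ∧ k₀ < k₁ ∧
      (∀ i, A i k₀ j₀ = 0) ∧
      ∑ i, (p i : ℂ) * (starRingEnd ℂ) (A i k₁ j₀) * A i k₀ j₁ ≠ 0 := by
  classical
  obtain ⟨i₀, hi₀⟩ := hnz
  have hex : ∃ s : ℕ, ∃ i, ∃ (j : Fin m) (k : Fin n),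
      (j : ℕ) + (k : ℕ) = s ∧ A i k j ≠ 0 := by
    rw [Ne, ← Matrix.ext_iff] at hi₀
    push_neg at hi₀
    obtain ⟨k, j, h⟩ := hi₀
    exact ⟨(j : ℕ) + (k : ℕ), i₀, j, k, rfl, h⟩
  set s₀ := Nat.find hex with hs₀
  obtain ⟨i₁, ja, ka, hjk, hne⟩ := Nat.find_spec hex
  have hmin : ∀ i (j : Fin m) (k : Fin n), (j : ℕ) + (k : ℕ) < s₀ → A i k j = 0 := by
    intro i j k h
    by_contra hc
    exact Nat.find_min hex h ⟨i, j, k, rfl, hc⟩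
  set T : Finset (Fin m × Fin n) :=
    Finset.univ.filter (fun P => (P.1 : ℕ) + (P.2 : ℕ) = s₀) with hT
  have hsum : ∀ i, ∑ P ∈ T, A i P.2 P.1 = 0 := by
    intro i
    have h1 : ∑ P ∈ T, A i P.2 P.1
        = ∑ j : Fin m, ∑ k : Fin n, (if (j : ℕ) + (k : ℕ) = s₀ then A i k j else 0) := by
      rw [hT, Finset.sum_filter, ← Finset.univ_product_univ, Finset.sum_product]
    rw [h1, hA i s₀]
  set G : (Fin m × Fin n) → (Fin m × Fin n) → ℂ :=
    fun P Q => ∑ i, (p i : ℂ) * (starRingEnd ℂ) (A i P.2 P.1) * A i Q.2 Q.1 with hG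
  have hrow : ∀ P, ∑ Q ∈ T, G P Q = 0 := by
    intro P
    rw [hG]
    rw [Finset.sum_comm]
    apply Finset.sum_eq_zero
    intro i _
    have : ∑ Q ∈ T, (p i : ℂ) * (starRingEnd ℂ) (A i P.2 P.1) * A i Q.2 Q.1
        = (p i : ℂ) * (starRingEnd ℂ) (A i P.2 P.1) * ∑ Q ∈ T, A i Q.2 Q.1 := by
      rw [Finset.mul_sum]
    rw [this, hsum i, mul_zero]
  set P₀ : Fin m × Fin n := (ja, ka) with hP₀
  have hP₀T : P₀ ∈ T := by simp [hT, hP₀, hjk, hs₀]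
  have hdiag : G P₀ P₀ ≠ 0 := by
    have hval : G P₀ P₀ = ((∑ i, p i * Complex.normSq (A i ka ja) : ℝ) : ℂ) := by
      rw [hG]
      push_cast
      apply Finset.sum_congr rfl
      intro i _
      rw [Complex.normSq_eq_conj_mul_self]
      ring
    rw [hval]
    rw [Complex.ofReal_ne_zero]
    have hpos : 0 < ∑ i, p i * Complex.normSq (A i ka ja) := by
      apply Finset.sum_pos' (fun i _ => mul_nonneg (hp i).le (Complex.normSq_nonneg _))
      exact ⟨i₁, Finset.mem_univ _, mul_pos (hp i₁) (by
        simpa [Complex.normSq_pos] using hne)⟩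
    exact ne_of_gt hpos
  have hQ : ∃ Q ∈ T, Q ≠ P₀ ∧ G P₀ Q ≠ 0 := by
    by_contra hc
    push_neg at hc
    have : ∑ Q ∈ T, G P₀ Q = G P₀ P₀ := by
      apply Finset.sum_eq_single_of_mem _ hP₀T
      intro Q hQT hQne
      exact hc Q hQT hQne
    rw [hrow P₀] at this
    exact hdiag this.symm
  obtain ⟨Q, hQT, hQne, hGne⟩ := hQ
  have hQdiag : (Q.1 : ℕ) + (Q.2 : ℕ) = s₀ := by
    simpa [hT] using hQT
  have hkne : Q.2 ≠ ka := by
    intro h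
    apply hQne
    have h1 : (Q.1 : ℕ) + (Q.2 : ℕ) = (ja : ℕ) + (ka : ℕ) := by
      rw [hQdiag, hjk, hs₀]
    rw [h] at h1
    have hj : Q.1 = ja := Fin.ext (by omega)
    rw [hP₀, Prod.ext_iff]
    exact ⟨hj, h⟩
  have hGsymm : ∀ P R, G R P = (starRingEnd ℂ) (G P R) := by
    intro P R
    rw [hG, map_sum]
    apply Finset.sum_congr rfl
    intro i _
    simp only [_root_.map_mul, Complex.conj_conj, Complex.conj_ofReal]
    ring
  rcases lt_or_gt_of_ne hkne with hlt | hgt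
  · -- Q.2 < ka : k₀ = Q.2, k₁ = ka, j₀ = ja, j₁ = Q.1, sum = G P₀ Q
    refine ⟨ja, Q.1, Q.2, ka, ?_, hlt, ?_, ?_⟩
    · rw [Fin.lt_def]
      have := hQdiag
      have h2 := hjk
      have h3 : (Q.2 : ℕ) < (ka : ℕ) := hlt
      omega
    · intro i
      apply hmin
      have h3 : (Q.2 : ℕ) < (ka : ℕ) := hlt
      omega
    · exact hGne
  · -- ka < Q.2 : use G Q P₀ ≠ 0
    refine ⟨Q.1, ja, ka, Q.2, ?_, hgt, ?_, ?_⟩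
    · rw [Fin.lt_def]
      have := hQdiag
      have h2 := hjk
      have h3 : (ka : ℕ) < (Q.2 : ℕ) := hgt
      omega
    · intro i
      apply hmin
      have h3 : (ka : ℕ) < (Q.2 : ℕ) := hgt
      omega
    · have : G Q P₀ ≠ 0 := by
        rw [hGsymm P₀ Q]
        simpa using hGne
      exact this
end

section
/- Let ρ = Σ_i p_i |v_i⟩⟨v_i| ∈ M_m(ℂ) ⊗ M_n(ℂ) with p_i > 0, Σ_i p_i = 1, and each |v_i⟩ a unit vector. If there exist indices j₀ ≠ j₁ ∈ {0,…,m−1} and k₀ ≠ k₁ ∈ {0,…,n−1} such that, writing v_i in the standard tensor basis, (v_i)_{j₀,k₀} = 0 for all i and Σ_i p_i · conj((v_i)_{j₁,k₀}) · (v_i)_{j₀,k₁} ≠ 0, then the partial transpose ρ^Γ is not positive semidefinite. -/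
open Matrix Complex Finset
open scoped ComplexOrder

/-- Partial transpose on the second factor: `(ρ^Γ)_{(j,k),(j',k')} = ρ_{(j,k'),(j',k)}`. -/
def ptranspose {m n : ℕ} (ρ : Matrix (Fin m × Fin n) (Fin m × Fin n) ℂ) :
    Matrix (Fin m × Fin n) (Fin m × Fin n) ℂ :=
  fun a b => ρ (a.1, b.2) (b.1, a.2)

/-- The outer product `|v⟩⟨v|`. -/
def outer {d : Type*} (v : d → ℂ) : Matrix d d ℂ :=
  fun a b => v a * (starRingEnd ℂ) (v b)

theorem stmt_5 (m n : ℕ) {ι : Type*} [Fintype ι]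
    (p : ι → ℝ) (v : ι → Fin m × Fin n → ℂ)
    (hp : ∀ i, 0 < p i) (hp1 : ∑ i, p i = 1)
    (hunit : ∀ i, ∑ x, Complex.normSq (v i x) = 1)
    (j₀ j₁ : Fin m) (k₀ k₁ : Fin n) (hj : j₀ ≠ j₁) (hk : k₀ ≠ k₁)
    (hzero : ∀ i, v i (j₀, k₀) = 0)
    (hsum : ∑ i, (p i : ℂ) * (starRingEnd ℂ) (v i (j₁, k₀)) * v i (j₀, k₁) ≠ 0) :
    ¬ (ptranspose (∑ i, (p i : ℂ) • outer (v i))).PosSemidef := by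
  intro h
  set M := ptranspose (∑ i, (p i : ℂ) • outer (v i)) with hM
  have hentry : ∀ a b, M a b
      = ∑ i, (p i : ℂ) * (v i (a.1, b.2) * (starRingEnd ℂ) (v i (b.1, a.2))) := by
    intro a b
    simp [hM, ptranspose, outer, Matrix.sum_apply]
  have haa : M (j₀, k₀) (j₀, k₀) = 0 := by
    rw [hentry]
    simp [hzero]
  have key := (h.dotProduct_mulVec_zero_iff (Pi.single ((j₀, k₀) : Fin m × Fin n) 1)).mp ?_
  · have h0 : M (j₁, k₁) (j₀, k₀) = 0 := by
      have := congrFun key (j₁, k₁)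
      simpa [Matrix.mulVec, dotProduct, Pi.single_apply] using this
    apply hsum
    have : (starRingEnd ℂ) (M (j₁, k₁) (j₀, k₀)) = 0 := by rw [h0]; simp
    rw [← this, hentry]
    rw [map_sum]
    refine Finset.sum_congr rfl fun i _ => ?_
    rw [_root_.map_mul, _root_.map_mul, Complex.conj_conj, Complex.conj_ofReal]
    ring
  · simp [Matrix.mulVec, dotProduct, Pi.single_apply, haa]
end

section
/- There exists a subspace S ⊆ ℂ^m ⊗ ℂ^n of dimension (m−1)(n−1) such that every density matrix ρ ∈ M_m(ℂ) ⊗ M_n(ℂ) whose range is contained in S has non-positive partial transpose, i.e., ρ^Γ is not positive semidefinite. Explicitly, S = span{ |j⟩|k+1⟩ − |j+1⟩|k⟩ : 0 ≤ j ≤ m−2, 0 ≤ k ≤ n−2 } works. -/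
open Matrix Complex Finset
open scoped ComplexOrder

lemma entSub_finrank (m n : ℕ) (hm : 2 ≤ m) (hn : 2 ≤ n) :
    Module.finrank ℂ (entSub m n) = (m - 1) * (n - 1) := by
  set f : Fin (m-1) × Fin (n-1) → (Fin m × Fin n → ℂ) := fun i =>
    Pi.single ((⟨i.1.1, by have := i.1.2; omega⟩ : Fin m),
        (⟨i.2.1 + 1, by have := i.2.2; omega⟩ : Fin n)) (1:ℂ)
      - Pi.single ((⟨i.1.1 + 1, by have := i.1.2; omega⟩ : Fin m),
        (⟨i.2.1, by have := i.2.2; omega⟩ : Fin n)) (1:ℂ) with hf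
  have hset : {x : Fin m × Fin n → ℂ | ∃ (j k : ℕ) (hj : j + 1 < m) (hk : k + 1 < n),
      x = Pi.single ((⟨j, by omega⟩ : Fin m), (⟨k + 1, hk⟩ : Fin n)) (1 : ℂ)
        - Pi.single ((⟨j + 1, hj⟩ : Fin m), (⟨k, by omega⟩ : Fin n)) (1 : ℂ)} = Set.range f := by
    ext x
    constructor
    · rintro ⟨j, k, hj, hk, rfl⟩
      exact ⟨(⟨j, by omega⟩, ⟨k, by omega⟩), rfl⟩
    · rintro ⟨⟨j, k⟩, rfl⟩
      exact ⟨j.1, k.1, by have := j.2; omega, by have := k.2; omega, rfl⟩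
  have hli : LinearIndependent ℂ f := by
    rw [Fintype.linearIndependent_iff]
    intro g hg i
    obtain ⟨j, k⟩ := i
    have H := congrArg (fun x : Fin m × Fin n → ℂ =>
      ∑ p : Fin m × Fin n, (if p.1.1 ≤ j.1 ∧ p.1.1 + p.2.1 = j.1 + k.1 + 1 then (1:ℂ) else 0) * x p) hg
    simp only [Finset.sum_apply, Pi.smul_apply, smul_eq_mul, Pi.zero_apply, mul_zero,
      Finset.sum_const_zero, Finset.mul_sum] at H
    rw [Finset.sum_comm] at H
    have key : ∀ i : Fin (m-1) × Fin (n-1),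
        (∑ p : Fin m × Fin n,
          (if p.1.1 ≤ j.1 ∧ p.1.1 + p.2.1 = j.1 + k.1 + 1 then (1:ℂ) else 0) * (g i * f i p))
        = if i = (j,k) then g i else 0 := by
      rintro ⟨a, b⟩
      simp only [hf, Pi.sub_apply, Pi.single_apply, mul_sub, mul_ite, mul_one, mul_zero,
        Finset.sum_sub_distrib, Finset.sum_ite_eq', Finset.mem_univ, if_true]
      have h3 : ((⟨a,b⟩ : Fin (m-1) × Fin (n-1)) = (j,k)) ↔ (a.1 = j.1 ∧ b.1 = k.1) := by
        simp [Prod.ext_iff, Fin.ext_iff]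
      rw [if_congr h3 rfl rfl]
      split_ifs with h1 h2 h4 <;> (try (exfalso; omega)) <;> ring
    rw [Finset.sum_congr rfl (fun i _ => key i), Finset.sum_ite_eq'] at H
    simpa using H
  rw [show entSub m n = Submodule.span ℂ (Set.range f) by rw [entSub, hset],
    finrank_span_eq_card hli]
  simp

lemma psd_diag_nonneg {N : Type*} [Fintype N] [DecidableEq N]
    {M : Matrix N N ℂ} (hM : M.PosSemidef) (i : N) : 0 ≤ M i i := by
  have := hM.dotProduct_mulVec_nonneg (Pi.single i 1)
  simpa [dotProduct, mulVec, Pi.single_apply] using this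

lemma psd_entry_eq_zero {N : Type*} [Fintype N] [DecidableEq N]
    {M : Matrix N N ℂ} (hM : M.PosSemidef) {i : N} (h : M i i = 0) (j : N) :
    M i j = 0 := by
  have h1 : star (Pi.single i (1:ℂ)) ⬝ᵥ M *ᵥ Pi.single i 1 = 0 := by
    simp [dotProduct, mulVec, Pi.single_apply, h]
  have h2 := (hM.dotProduct_mulVec_zero_iff _).mp h1
  have h3 : M j i = 0 := by
    have := congrFun h2 j
    simpa [mulVec, dotProduct, Pi.single_apply] using this
  rw [← hM.1.apply i j, h3, star_zero]

lemma sum_indicator_pair {β : Type*} [DecidableEq β] {I : Finset β} {A B : β} (hA : A ∈ I) (X : ℂ) :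
    ∑ δ ∈ I, (if A = δ then (1:ℂ) else 0) * ((if B = δ then 1 else 0) * X)
      = if A = B then X else 0 := by
  rw [Finset.sum_eq_single A]
  · by_cases h : A = B
    · simp [h]
    · simp only [if_pos rfl, one_mul, if_neg h]
      rw [if_neg (fun hc : B = A => h hc.symm), zero_mul, mul_zero]
  · intro δ _ hδ
    rw [if_neg (fun hc : A = δ => hδ hc.symm), zero_mul]
  · intro h; exact absurd hA h

lemma npt_of_range (m n : ℕ) (hm : 2 ≤ m) (hn : 2 ≤ n)
    (ρ : Matrix (Fin m × Fin n) (Fin m × Fin n) ℂ)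
    (hρ : ρ.PosSemidef) (htr : ρ.trace = 1)
    (hran : ∀ v, ρ *ᵥ v ∈ entSub m n) :
    ¬ (ptranspose ρ).PosSemidef := by
  intro hσ
  set I : Finset ℤ := Finset.Icc (1 - (n:ℤ)) ((m:ℤ) - 1) with hI
  set u : ℤ → (Fin m × Fin n → ℂ) :=
    fun δ p => if ((p.1.1 : ℤ) - p.2.1 = δ) then 1 else 0 with hu
  set w : ℕ → (Fin m × Fin n → ℂ) :=
    fun t p => if (p.1.1 + p.2.1 = t) then 1 else 0 with hw
  -- the linear functionals x ↦ ∑ p, w t p * x p vanish on entSub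
  have hker : ∀ t : ℕ, ∀ x ∈ entSub m n, ∑ p : Fin m × Fin n, w t p * x p = 0 := by
    intro t x hx
    let L : (Fin m × Fin n → ℂ) →ₗ[ℂ] ℂ :=
      { toFun := fun x => ∑ p : Fin m × Fin n, w t p * x p
        map_add' := fun x y => by
          simp [mul_add, Finset.sum_add_distrib]
        map_smul' := fun c x => by
          simp only [Pi.smul_apply, smul_eq_mul, RingHom.id_apply, Finset.mul_sum]
          exact Finset.sum_congr rfl fun p _ => by ring }
    have hle : entSub m n ≤ LinearMap.ker L := by
      rw [entSub, Submodule.span_le]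
      rintro y ⟨j, k, hj, hk, rfl⟩
      simp only [SetLike.mem_coe, LinearMap.mem_ker, LinearMap.coe_mk, AddHom.coe_mk, L]
      simp only [Pi.sub_apply, Pi.single_apply, mul_sub, mul_ite, mul_one, mul_zero,
        Finset.sum_sub_distrib, Finset.sum_ite_eq', Finset.mem_univ, if_true]
      simp only [hw]
      rw [sub_eq_zero]
      congr 1
      exact propext (by omega)
    exact hle hx
  -- the diagonal-sum quadratic forms of ρ vanish
  have hP : ∀ t : ℕ, (∑ x : (Fin m × Fin n) × (Fin m × Fin n),
      (if x.1.1.1 + x.1.2.1 = t then (1:ℂ) else 0) *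
        ((if x.2.1.1 + x.2.2.1 = t then 1 else 0) * ρ x.1 x.2)) = 0 := by
    intro t
    have h1 := hker t (ρ *ᵥ w t) (hran (w t))
    refine Eq.trans ?_ h1
    rw [Fintype.sum_prod_type]
    refine Finset.sum_congr rfl fun p _ => ?_
    rw [mulVec, dotProduct, Finset.mul_sum]
    refine Finset.sum_congr rfl fun q _ => ?_
    simp only [hw]
    ring
  -- expansion of the quadratic form of the partial transpose
  have step1 : ∀ δ : ℤ, star (u δ) ⬝ᵥ ptranspose ρ *ᵥ u δ
      = ∑ x : (Fin m × Fin n) × (Fin m × Fin n),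
          (if ((x.1.1.1 : ℤ) - x.1.2.1 = δ) then (1:ℂ) else 0) *
          ((if ((x.2.1.1 : ℤ) - x.2.2.1 = δ) then 1 else 0) * ρ (x.1.1, x.2.2) (x.2.1, x.1.2)) := by
    intro δ
    rw [Fintype.sum_prod_type]
    simp only [dotProduct, mulVec, Pi.star_apply, hu, apply_ite (star : ℂ → ℂ),
      star_one, star_zero, Finset.mul_sum, ptranspose]
    exact Finset.sum_congr rfl fun p _ => Finset.sum_congr rfl fun q _ => by ring
  -- the key identity
  have key : ∑ δ ∈ I, (star (u δ) ⬝ᵥ ptranspose ρ *ᵥ u δ) = 0 := by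
    calc ∑ δ ∈ I, (star (u δ) ⬝ᵥ ptranspose ρ *ᵥ u δ)
        = ∑ δ ∈ I, ∑ x : (Fin m × Fin n) × (Fin m × Fin n),
            (if ((x.1.1.1 : ℤ) - x.1.2.1 = δ) then (1:ℂ) else 0) *
            ((if ((x.2.1.1 : ℤ) - x.2.2.1 = δ) then 1 else 0) *
              ρ (x.1.1, x.2.2) (x.2.1, x.1.2)) := by
          exact Finset.sum_congr rfl fun δ _ => step1 δ
      _ = ∑ x : (Fin m × Fin n) × (Fin m × Fin n),
            (if ((x.1.1.1 : ℤ) - x.1.2.1 = (x.2.1.1 : ℤ) - x.2.2.1)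
              then ρ (x.1.1, x.2.2) (x.2.1, x.1.2) else 0) := by
          rw [Finset.sum_comm]
          refine Finset.sum_congr rfl fun x _ => ?_
          refine sum_indicator_pair ?_ _
          rw [hI, Finset.mem_Icc]
          have := x.1.1.2; have := x.1.2.2
          omega
      _ = ∑ x : (Fin m × Fin n) × (Fin m × Fin n),
            (if (x.1.1.1 + x.1.2.1 = x.2.1.1 + x.2.2.1)
              then ρ x.1 x.2 else 0) := by
          refine Fintype.sum_equiv
            (⟨fun x => ((x.1.1, x.2.2), (x.2.1, x.1.2)),
              fun x => ((x.1.1, x.2.2), (x.2.1, x.1.2)), fun x => rfl, fun x => rfl⟩ :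
              ((Fin m × Fin n) × (Fin m × Fin n)) ≃ ((Fin m × Fin n) × (Fin m × Fin n)))
            _ _ ?_
          rintro ⟨⟨a, b⟩, ⟨c, d⟩⟩
          simp only [Equiv.coe_fn_mk]
          refine if_congr ?_ rfl rfl
          omega
      _ = ∑ t ∈ Finset.range (m + n - 1), ∑ x : (Fin m × Fin n) × (Fin m × Fin n),
            (if x.1.1.1 + x.1.2.1 = t then (1:ℂ) else 0) *
            ((if x.2.1.1 + x.2.2.1 = t then 1 else 0) * ρ x.1 x.2) := by
          rw [Finset.sum_comm]
          refine Finset.sum_congr rfl fun x _ => ?_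
          refine (sum_indicator_pair ?_ _).symm
          rw [Finset.mem_range]
          have := x.1.1.2; have := x.1.2.2
          omega
      _ = 0 := by
          exact Finset.sum_eq_zero fun t _ => hP t
  -- each quadratic form is zero
  have hQzero : ∀ δ ∈ I, star (u δ) ⬝ᵥ ptranspose ρ *ᵥ u δ = 0 := by
    have := (Finset.sum_eq_zero_iff_of_nonneg (fun δ _ => hσ.dotProduct_mulVec_nonneg (u δ))).mp key
    exact this
  -- downward induction on the difference of indices
  have claim : ∀ δ : ℤ, (∀ (a : Fin m) (b : Fin n), δ < (a.1:ℤ) - b.1 → ρ (a,b) (a,b) = 0) →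
      ∀ (a : Fin m) (b : Fin n), (a.1:ℤ) - b.1 = δ → ρ (a,b) (a,b) = 0 := by
    intro δ hIH a b hab
    have hmem : δ ∈ I := by
      rw [hI, Finset.mem_Icc]; have := a.2; have := b.2; omega
    have hQ := hQzero δ hmem
    rw [step1 δ] at hQ
    have hnonneg : ∀ x ∈ (Finset.univ : Finset ((Fin m × Fin n) × (Fin m × Fin n))),
        0 ≤ (if ((x.1.1.1 : ℤ) - x.1.2.1 = δ) then (1:ℂ) else 0) *
          ((if ((x.2.1.1 : ℤ) - x.2.2.1 = δ) then 1 else 0) * ρ (x.1.1, x.2.2) (x.2.1, x.1.2)) := by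
      rintro ⟨⟨a', b'⟩, ⟨c', d'⟩⟩ -
      by_cases h1 : ((a'.1 : ℤ) - b'.1 = δ)
      · by_cases h2 : ((c'.1 : ℤ) - d'.1 = δ)
        · rw [if_pos h1, if_pos h2, one_mul, one_mul]
          rcases lt_trichotomy (a'.1) (c'.1) with hlt | heq | hgt
          · have hz : ρ (c', b') (c', b') = 0 := hIH c' b' (by omega)
            have hz2 : ρ (a', d') (c', b') = 0 := by
              rw [← hρ.1.apply (a', d') (c', b'), psd_entry_eq_zero hρ hz (a', d'), star_zero]
            rw [hz2]
          · have e1 : c' = a' := Fin.ext (by omega)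
            have e2 : b' = d' := Fin.ext (by omega)
            subst e1; subst e2
            exact psd_diag_nonneg hρ _
          · have hz : ρ (a', d') (a', d') = 0 := hIH a' d' (by omega)
            rw [psd_entry_eq_zero hρ hz (c', b')]
        · rw [if_neg h2, zero_mul, mul_zero]
      · rw [if_neg h1, zero_mul]
    have h0 := (Finset.sum_eq_zero_iff_of_nonneg hnonneg).mp hQ ((a,b),(a,b)) (Finset.mem_univ _)
    simpa [hab] using h0
  have main : ∀ N : ℕ, ∀ (a : Fin m) (b : Fin n),
      (m:ℤ) - 1 - N ≤ (a.1:ℤ) - b.1 → ρ (a,b) (a,b) = 0 := by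
    intro N
    induction N with
    | zero =>
      intro a b h
      refine claim ((m:ℤ) - 1) ?_ a b ?_
      · intro a' b' h'; exfalso; have := a'.2; have := b'.2; omega
      · have := a.2; have := b.2; simp at h; omega
    | succ N ih =>
      intro a b h
      by_cases h' : (m:ℤ) - 1 - N ≤ (a.1:ℤ) - b.1
      · exact ih a b h'
      · refine claim ((m:ℤ) - 1 - N - 1) (fun a' b' hd => ih a' b' (by omega)) a b (by push_cast at h ⊢; omega)
  have alldiag : ∀ p : Fin m × Fin n, ρ p p = 0 := by
    rintro ⟨a, b⟩
    exact main (m + n) a b (by have := a.2; have := b.2; push_cast; omega)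
  have htr0 : ρ.trace = 0 := by
    rw [Matrix.trace]
    exact Finset.sum_eq_zero fun p _ => alldiag p
  rw [htr] at htr0
  exact one_ne_zero htr0

theorem stmt_8 (m n : ℕ) (hm : 2 ≤ m) (hn : 2 ≤ n) :
    Module.finrank ℂ (entSub m n) = (m - 1) * (n - 1) ∧
    ∀ ρ : Matrix (Fin m × Fin n) (Fin m × Fin n) ℂ,
      ρ.PosSemidef → ρ.trace = 1 →
      (∀ v, ρ *ᵥ v ∈ entSub m n) →
      ¬ (ptranspose ρ).PosSemidef := by
  exact ⟨entSub_finrank m n hm hn,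
    fun ρ hρ htr hran => npt_of_range m n hm hn ρ hρ htr hran⟩
end

section
/- Every state ρ ∈ M_m(ℂ) ⊗ M_n(ℂ) whose range is contained in the subspace S = span{ |j⟩|k+1⟩ − |j+1⟩|k⟩ : 0 ≤ j ≤ m−2, 0 ≤ k ≤ n−2 } is entangled (not separable). -/
open Matrix Complex Finset Kronecker
open scoped ComplexOrder

/-- Separability of a bipartite state: a convex combination of pure product states. -/
def Separable {m n : ℕ} (ρ : Matrix (Fin m × Fin n) (Fin m × Fin n) ℂ) : Prop :=
  ∃ (k : ℕ) (p : Fin k → ℝ) (x : Fin k → Fin m → ℂ) (y : Fin k → Fin n → ℂ),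
    (∀ i, 0 ≤ p i) ∧ ∑ i, p i = 1 ∧
    (∀ i, ∑ a, Complex.normSq (x i a) = 1) ∧
    (∀ i, ∑ b, Complex.normSq (y i b) = 1) ∧
    ρ = ∑ i, (p i : ℂ) • (outer (x i) ⊗ₖ outer (y i))

/-- The "anti-diagonal sum" linear functional. -/
noncomputable def Lmap (m n s : ℕ) : (Fin m × Fin n → ℂ) →ₗ[ℂ] ℂ where
  toFun w := ∑ p ∈ Finset.univ.filter
      (fun p : Fin m × Fin n => (p.1 : ℕ) + (p.2 : ℕ) = s), w p
  map_add' w₁ w₂ := Finset.sum_add_distrib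
  map_smul' c w := by simp [Finset.mul_sum]

lemma Lmap_single (m n s : ℕ) (q : Fin m × Fin n) :
    Lmap m n s (Pi.single q (1 : ℂ)) =
      if (q.1 : ℕ) + (q.2 : ℕ) = s then 1 else 0 := by
  simp only [Lmap, LinearMap.coe_mk, AddHom.coe_mk]
  rw [show (∑ p ∈ Finset.univ.filter
      (fun p : Fin m × Fin n => (p.1 : ℕ) + (p.2 : ℕ) = s), Pi.single q (1:ℂ) p)
      = ∑ p ∈ Finset.univ.filter
      (fun p : Fin m × Fin n => (p.1 : ℕ) + (p.2 : ℕ) = s),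
        (if p = q then (1:ℂ) else 0) from
    Finset.sum_congr rfl (fun p _ => by rw [Pi.single_apply])]
  rw [Finset.sum_ite_eq' _ q (fun _ => (1:ℂ))]
  simp

lemma entSub_le_ker (m n s : ℕ) :
    entSub m n ≤ LinearMap.ker (Lmap m n s) := by
  rw [entSub, Submodule.span_le]
  rintro x ⟨j, k, hj, hk, rfl⟩
  simp only [SetLike.mem_coe, LinearMap.mem_ker, map_sub, Lmap_single]
  rw [show j + (k + 1) = j + 1 + k from by omega, sub_self]

theorem stmt_9 (m n : ℕ) (hm : 2 ≤ m) (hn : 2 ≤ n)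
    (ρ : Matrix (Fin m × Fin n) (Fin m × Fin n) ℂ)
    (hρ : ρ.PosSemidef) (htr : ρ.trace = 1)
    (hrange : ∀ v, ρ *ᵥ v ∈ entSub m n) :
    ¬ Separable ρ := by
  rintro ⟨K, p, x, y, hp0, hp1, hxn, hyn, hdecomp⟩
  -- the anti-diagonal filter
  set F : ℕ → Finset (Fin m × Fin n) := fun s => Finset.univ.filter
      (fun p : Fin m × Fin n => (p.1 : ℕ) + (p.2 : ℕ) = s) with hF
  -- the convolution coefficients
  set c : Fin K → ℕ → ℂ := fun i s => ∑ q ∈ F s, x i q.1 * y i q.2 with hc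
  -- the anti-diagonal indicator vector
  have key : ∀ i s, p i * Complex.normSq (c i s) = 0 := by
    intro i s
    set u : Fin m × Fin n → ℂ := fun q =>
      if (q.1 : ℕ) + (q.2 : ℕ) = s then 1 else 0 with hu
    have h0 : Lmap m n s (ρ *ᵥ u) = 0 := entSub_le_ker m n s (hrange u)
    -- compute Lmap of each product term
    have hterm : ∀ j : Fin K,
        Lmap m n s ((outer (x j) ⊗ₖ outer (y j)) *ᵥ u)
          = (Complex.normSq (c j s) : ℂ) := by
      intro j
      simp only [Lmap, LinearMap.coe_mk, AddHom.coe_mk]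
      have hmv : ∀ q : Fin m × Fin n,
          ((outer (x j) ⊗ₖ outer (y j)) *ᵥ u) q
            = x j q.1 * y j q.2 * (starRingEnd ℂ) (c j s) := by
        intro q
        simp only [mulVec, dotProduct, hu]
        rw [show (∑ r : Fin m × Fin n, (outer (x j) ⊗ₖ outer (y j)) q r *
            (if (r.1 : ℕ) + (r.2 : ℕ) = s then (1:ℂ) else 0))
            = ∑ r ∈ F s, (outer (x j) ⊗ₖ outer (y j)) q r from by
          rw [Finset.sum_filter]
          exact Finset.sum_congr rfl (fun r _ => by split <;> simp)]
        rw [hc]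
        simp only [map_sum, Finset.mul_sum]
        refine Finset.sum_congr rfl (fun r _ => ?_)
        simp only [Matrix.kroneckerMap_apply, outer, _root_.map_mul]
        ring
      rw [Finset.sum_congr rfl (fun q _ => hmv q), ← Finset.sum_mul]
      exact Complex.mul_conj (c j s)
    -- total identity
    have hsum : ∑ j, (p j : ℂ) * (Complex.normSq (c j s) : ℂ) = 0 := by
      rw [← h0, hdecomp]
      have hmvs : (∑ j, (p j : ℂ) • (outer (x j) ⊗ₖ outer (y j))) *ᵥ u
          = ∑ j, ((p j : ℂ) • (outer (x j) ⊗ₖ outer (y j))) *ᵥ u := by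
        ext q
        simp only [Matrix.mulVec, dotProduct, Finset.sum_apply,
          Matrix.sum_apply, Finset.sum_mul]
        rw [Finset.sum_comm]
      rw [hmvs, map_sum]
      refine Finset.sum_congr rfl (fun j _ => ?_)
      rw [Matrix.smul_mulVec, _root_.map_smul, hterm j, smul_eq_mul]
    -- take real parts
    have hre : ∑ j, p j * Complex.normSq (c j s) = 0 := by
      have := congrArg Complex.re hsum
      simpa [Complex.re_sum] using this
    have hnn : ∀ j ∈ Finset.univ, 0 ≤ p j * Complex.normSq (c j s) :=
      fun j _ => mul_nonneg (hp0 j) (Complex.normSq_nonneg _)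
    exact (Finset.sum_eq_zero_iff_of_nonneg hnn).mp hre i (Finset.mem_univ i)
  -- pick an index with positive weight
  obtain ⟨i, hi⟩ : ∃ i, p i ≠ 0 := by
    by_contra h
    push_neg at h
    simp [h] at hp1
  have hczero : ∀ s, c i s = 0 := by
    intro s
    have := key i s
    have h2 : Complex.normSq (c i s) = 0 := by
      rcases mul_eq_zero.mp this with h | h
      · exact absurd h hi
      · exact h
    exact Complex.normSq_eq_zero.mp h2
  -- polynomials
  classical
  set P : Polynomial ℂ := ∑ a : Fin m, Polynomial.C (x i a) * Polynomial.X ^ (a : ℕ) with hP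
  set Q : Polynomial ℂ := ∑ b : Fin n, Polynomial.C (y i b) * Polynomial.X ^ (b : ℕ) with hQ
  have hPQ : P * Q = 0 := by
    ext s
    rw [hP, hQ, Finset.sum_mul_sum]
    simp only [Polynomial.coeff_zero, Polynomial.finset_sum_coeff]
    have : ∀ (a : Fin m) (b : Fin n),
        (Polynomial.C (x i a) * Polynomial.X ^ (a:ℕ) *
          (Polynomial.C (y i b) * Polynomial.X ^ (b:ℕ))).coeff s
        = if (a:ℕ) + (b:ℕ) = s then x i a * y i b else 0 := by
      intro a b
      rw [mul_mul_mul_comm, ← Polynomial.C_mul, ← pow_add,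
        Polynomial.coeff_C_mul, Polynomial.coeff_X_pow]
      simp [eq_comm, mul_ite]
    rw [Finset.sum_congr rfl (fun a _ => Finset.sum_congr rfl (fun b _ => this a b))]
    have h2 : ∑ q ∈ Finset.univ.filter
        (fun q : Fin m × Fin n => (q.1 : ℕ) + (q.2 : ℕ) = s),
        x i q.1 * y i q.2 = 0 := hczero s
    rw [Finset.sum_filter, Fintype.sum_prod_type] at h2
    exact h2
  have hx1 := hxn i
  have hy1 := hyn i
  rcases mul_eq_zero.mp hPQ with h | h
  · -- P = 0, so all x i a = 0
    have hx0 : ∀ a : Fin m, x i a = 0 := by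
      intro a
      have := congrArg (fun q => Polynomial.coeff q (a : ℕ)) h
      simp only [hP, Polynomial.finset_sum_coeff, Polynomial.coeff_C_mul,
        Polynomial.coeff_X_pow, Polynomial.coeff_zero] at this
      rw [Finset.sum_congr rfl (fun a' _ => show x i a' * (if (a:ℕ) = (a':ℕ) then (1:ℂ) else 0)
          = if a' = a then x i a' else 0 from by
        rcases eq_or_ne a' a with rfl | hne
        · simp
        · have hv : (a : ℕ) ≠ (a' : ℕ) := fun h' => hne (Fin.val_injective h'.symm)
          simp [hne, hv])] at this
      rwa [Finset.sum_ite_eq' _ a (fun a' => x i a'), if_pos (Finset.mem_univ a)] at this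
    simp [hx0] at hx1
  · have hy0 : ∀ b : Fin n, y i b = 0 := by
      intro b
      have := congrArg (fun q => Polynomial.coeff q (b : ℕ)) h
      simp only [hQ, Polynomial.finset_sum_coeff, Polynomial.coeff_C_mul,
        Polynomial.coeff_X_pow, Polynomial.coeff_zero] at this
      rw [Finset.sum_congr rfl (fun b' _ => show y i b' * (if (b:ℕ) = (b':ℕ) then (1:ℂ) else 0)
          = if b' = b then y i b' else 0 from by
        rcases eq_or_ne b' b with rfl | hne
        · simp
        · have hv : (b : ℕ) ≠ (b' : ℕ) := fun h' => hne (Fin.val_injective h'.symm)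
          simp [hne, hv])] at this
      rwa [Finset.sum_ite_eq' _ b (fun b' => y i b'), if_pos (Finset.mem_univ b)] at this
    simp [hy0] at hy1
end

section
/- If ρ ∈ M_m(ℂ) ⊗ M_n(ℂ) is separable, then ρ^Γ is positive semidefinite (the Peres PPT criterion). -/
open Matrix Complex Finset Kronecker
open scoped ComplexOrder

lemma kron_conjTranspose {a b : Type*} (A : Matrix a a ℂ) (B : Matrix b b ℂ) :
    (A ⊗ₖ B)ᴴ = Aᴴ ⊗ₖ Bᴴ := by
  ext x y
  simp [Matrix.conjTranspose_apply, Matrix.kroneckerMap_apply, _root_.map_mul]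

lemma kron_posSemidef {a b : Type*} [Fintype a] [Fintype b] [DecidableEq a] [DecidableEq b]
    {A : Matrix a a ℂ} {B : Matrix b b ℂ}
    (hA : A.PosSemidef) (hB : B.PosSemidef) : (A ⊗ₖ B).PosSemidef := by
  exact hA.kronecker hB

lemma smul_posSemidef {a : Type*} [Fintype a] {A : Matrix a a ℂ} (hA : A.PosSemidef)
    {c : ℝ} (hc : 0 ≤ c) : ((c : ℂ) • A).PosSemidef := by
  constructor
  · unfold Matrix.IsHermitian
    rw [Matrix.conjTranspose_smul, hA.1.eq]
    congr 1
    simp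
  · intro x
    exact (hA.smul (a := (c : ℂ)) (by exact_mod_cast hc)).2 x

theorem stmt_10 (m n : ℕ) {ι : Type*} [Fintype ι]
    (p : ι → ℝ) (σ : ι → Matrix (Fin m) (Fin m) ℂ) (τ : ι → Matrix (Fin n) (Fin n) ℂ)
    (hp : ∀ i, 0 ≤ p i) (hp1 : ∑ i, p i = 1)
    (hσ : ∀ i, (σ i).PosSemidef) (hσtr : ∀ i, (σ i).trace = 1)
    (hτ : ∀ i, (τ i).PosSemidef) (hτtr : ∀ i, (τ i).trace = 1)
    (ρ : Matrix (Fin m × Fin n) (Fin m × Fin n) ℂ)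
    (hρ : ρ = ∑ i, (p i : ℂ) • (σ i ⊗ₖ τ i)) :
    (ptranspose ρ).PosSemidef := by
  have key : ptranspose ρ = ∑ i, (p i : ℂ) • (σ i ⊗ₖ (τ i)ᵀ) := by
    ext a b
    simp only [ptranspose, hρ, Matrix.sum_apply, Matrix.smul_apply,
      Matrix.kroneckerMap_apply, Matrix.transpose_apply, smul_eq_mul]
  rw [key]
  have : ∀ i ∈ Finset.univ, ((p i : ℂ) • (σ i ⊗ₖ (τ i)ᵀ)).PosSemidef := fun i _ =>
    smul_posSemidef (kron_posSemidef (hσ i) (hτ i).transpose) (hp i)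
  exact Finset.sum_induction _ Matrix.PosSemidef (fun _ _ h1 h2 => h1.add h2)
    Matrix.PosSemidef.zero this
end

section
/- The dual cone of the set of PPT states in M_m(ℂ) ⊗ M_n(ℂ) (with respect to the trace inner product on Hermitian matrices) equals { Y₁ + Y₂^Γ : Y₁, Y₂ positive semidefinite }. -/
open Matrix Complex Finset
open scoped ComplexOrder

section aux
set_option linter.unusedSectionVars false
variable {k : Type*} [Fintype k] [DecidableEq k]

lemma aux_diag_nonneg {A : Matrix k k ℂ} (hA : A.PosSemidef) (i : k) : 0 ≤ A i i := by
  have := hA.dotProduct_mulVec_nonneg (Pi.single i 1)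
  simpa [dotProduct, Pi.single_apply, apply_ite, Matrix.mulVec] using this

open scoped MatrixOrder in
lemma aux_psd_decomp {A : Matrix k k ℂ} (hA : A.PosSemidef) : ∃ C : Matrix k k ℂ, A = Cᴴ * C := by
  obtain ⟨B, rfl⟩ := CStarAlgebra.nonneg_iff_eq_star_mul_self.mp hA.nonneg
  exact ⟨B, rfl⟩

lemma aux_trace_nonneg {A : Matrix k k ℂ} (hA : A.PosSemidef) : 0 ≤ A.trace :=
  Finset.sum_nonneg fun i _ => aux_diag_nonneg hA i

lemma aux_trace_re {A : Matrix k k ℂ} (hA : A.PosSemidef) : A.trace = (A.trace.re : ℂ) := by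
  have h := aux_trace_nonneg hA
  rw [Complex.le_def] at h
  apply Complex.ext <;> simp [← h.2]

lemma aux_trace_mul_nonneg {A B : Matrix k k ℂ} (hA : A.PosSemidef) (hB : B.PosSemidef) :
    0 ≤ (A * B).trace := by
  obtain ⟨C, rfl⟩ := aux_psd_decomp hB
  have : (A * (Cᴴ * C)).trace = (C * A * Cᴴ).trace := by
    rw [← Matrix.mul_assoc, Matrix.trace_mul_comm, ← Matrix.mul_assoc]
  rw [this]
  exact aux_trace_nonneg (hA.mul_mul_conjTranspose_same C)

lemma aux_star_quad {M : Matrix k k ℂ} (hM : M.IsHermitian) (x : k → ℂ) :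
    star (star x ⬝ᵥ M *ᵥ x) = star x ⬝ᵥ M *ᵥ x := by
  conv_lhs => rw [← Matrix.star_dotProduct, Matrix.star_mulVec]
  rw [Matrix.dotProduct_mulVec, hM.eq]

lemma aux_vecMulVec_psd (x : k → ℂ) : (Matrix.vecMulVec x (star x)).PosSemidef := by
  rw [Matrix.vecMulVec_eq Unit, ← Matrix.conjTranspose_replicateCol]
  exact Matrix.posSemidef_self_mul_conjTranspose _

lemma aux_trace_vecMulVec_mul (x : k → ℂ) (M : Matrix k k ℂ) :
    (Matrix.vecMulVec x (star x) * M).trace = star x ⬝ᵥ M *ᵥ x := by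
  simp only [Matrix.trace, Matrix.diag, Matrix.mul_apply, Matrix.vecMulVec_apply,
    dotProduct, Matrix.mulVec, Pi.star_apply]
  rw [Finset.sum_comm]
  congr 1; ext j
  rw [Finset.mul_sum]
  congr 1; ext i
  ring

lemma aux_psd_of_trace_test {M : Matrix k k ℂ} (hM : M.IsHermitian)
    (h : ∀ X : Matrix k k ℂ, X.PosSemidef → 0 ≤ ((X * M).trace).re) : M.PosSemidef := by
  refine Matrix.PosSemidef.of_dotProduct_mulVec_nonneg hM fun x => ?_
  have h1 := h _ (aux_vecMulVec_psd x)
  rw [aux_trace_vecMulVec_mul] at h1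
  have h2 := aux_star_quad hM x
  rw [Complex.le_def]
  refine ⟨by simpa using h1, ?_⟩
  have := congrArg Complex.im h2
  simp only [Complex.star_def, Complex.conj_im] at this
  simpa using (by linarith : (star x ⬝ᵥ M *ᵥ x).im = 0).symm

lemma aux_smul_psd {A : Matrix k k ℂ} (hA : A.PosSemidef) {c : ℝ} (hc : 0 ≤ c) :
    ((c : ℂ) • A).PosSemidef := by
  refine Matrix.PosSemidef.of_dotProduct_mulVec_nonneg ?_ fun x => ?_
  · unfold Matrix.IsHermitian
    rw [Matrix.conjTranspose_smul, hA.1.eq]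
    simp
  · have := hA.dotProduct_mulVec_nonneg x
    rw [Matrix.smul_mulVec, dotProduct_smul]
    exact smul_nonneg (by exact_mod_cast hc) this

lemma aux_trace_zero {A : Matrix k k ℂ} (hA : A.PosSemidef) (h : A.trace = 0) : A = 0 := by
  obtain ⟨C, rfl⟩ := aux_psd_decomp hA
  have hC : C = 0 := by
    have h2 : ∀ j i, Complex.normSq (C i j) = 0 := by
      have : (Cᴴ * C).trace.re = ∑ j, ∑ i, Complex.normSq (C i j) := by
        simp only [Matrix.trace, Matrix.diag, Matrix.mul_apply, Matrix.conjTranspose_apply]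
        rw [Complex.re_sum]
        congr 1; ext j
        rw [Complex.re_sum]
        congr 1; ext i
        simp [Complex.star_def, Complex.normSq_apply, Complex.mul_re]
      rw [h, Complex.zero_re] at this
      intro j i
      have hnn : ∀ j ∈ Finset.univ, (0:ℝ) ≤ ∑ i, Complex.normSq (C i j) :=
        fun j _ => Finset.sum_nonneg fun i _ => Complex.normSq_nonneg _
      have hj := (Finset.sum_eq_zero_iff_of_nonneg hnn).mp this.symm j (Finset.mem_univ j)
      exact (Finset.sum_eq_zero_iff_of_nonneg (fun i _ => Complex.normSq_nonneg _)).mp hj i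
        (Finset.mem_univ i)
    ext i j
    simpa using Complex.normSq_eq_zero.mp (h2 j i)
  simp [hC]


lemma aux_diag_re_le_trace {A : Matrix k k ℂ} (hA : A.PosSemidef) (i : k) :
    (A i i).re ≤ A.trace.re := by
  rw [Matrix.trace, Complex.re_sum]
  exact Finset.single_le_sum (f := fun l => (A.diag l).re)
    (fun l _ => by simpa using (Complex.le_def.mp (aux_diag_nonneg hA l)).1)
    (Finset.mem_univ i)

lemma aux_entry_bound {A : Matrix k k ℂ} (hA : A.PosSemidef) (i j : k) :
    ‖A i j‖ ≤ A.trace.re := by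
  obtain ⟨C, rfl⟩ := aux_psd_decomp hA
  have hd : ∀ i, ((Cᴴ * C) i i).re = ∑ l, ‖C l i‖ ^ 2 := by
    intro i
    rw [Matrix.mul_apply, Complex.re_sum]
    congr 1; ext l
    simp only [Matrix.conjTranspose_apply]
    rw [Complex.star_def, mul_comm, Complex.mul_conj]
    rw [Complex.ofReal_re, Complex.normSq_eq_norm_sq]
  have h1 : ‖(Cᴴ * C) i j‖ ≤ ((Cᴴ * C) i i).re / 2 + ((Cᴴ * C) j j).re / 2 := by
    rw [Matrix.mul_apply]
    calc ‖∑ l, Cᴴ i l * C l j‖ ≤ ∑ l, ‖Cᴴ i l * C l j‖ := norm_sum_le _ _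
      _ ≤ ∑ l, (‖C l i‖ ^ 2 / 2 + ‖C l j‖ ^ 2 / 2) := by
          refine Finset.sum_le_sum fun l _ => ?_
          rw [norm_mul, Matrix.conjTranspose_apply, norm_star]
          nlinarith [sq_nonneg (‖C l i‖ - ‖C l j‖)]
      _ = ((Cᴴ * C) i i).re / 2 + ((Cᴴ * C) j j).re / 2 := by
          rw [Finset.sum_add_distrib, hd i, hd j, ← Finset.sum_div, ← Finset.sum_div]
  refine h1.trans ?_
  have := aux_diag_re_le_trace hA i
  have := aux_diag_re_le_trace hA j
  linarith




def toE (X : Matrix k k ℂ) : EuclideanSpace ℂ (k × k) :=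
  WithLp.toLp 2 (fun p : k × k => X p.1 p.2)
def ofE (x : EuclideanSpace ℂ (k × k)) : Matrix k k ℂ := Matrix.of fun i j => x (i, j)

lemma ofE_toE (X : Matrix k k ℂ) : ofE (toE X) = X := rfl
lemma toE_add (X Y : Matrix k k ℂ) : toE (X + Y) = toE X + toE Y := rfl

lemma contEval (p : k × k) : Continuous fun x : EuclideanSpace ℂ (k × k) => x p :=
  LinearMap.continuous_of_finiteDimensional
    (⟨⟨fun x => x p, fun _ _ => rfl⟩, fun _ _ => rfl⟩ : EuclideanSpace ℂ (k × k) →ₗ[ℂ] ℂ)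

example (x y : EuclideanSpace ℂ (k × k)) : (inner ℂ x y : ℂ) = ∑ p, (starRingEnd ℂ) (x p) * y p := by
  rw [PiLp.inner_apply]
  refine Finset.sum_congr rfl fun p _ => ?_
  rw [RCLike.inner_apply]; ring

lemma normE_apply_le (x : EuclideanSpace ℂ (k × k)) (p : k × k) : ‖x p‖ ≤ ‖x‖ := by
  rw [EuclideanSpace.norm_eq]
  refine le_trans ?_ (Real.sqrt_le_sqrt (Finset.single_le_sum (f := fun q => ‖x q‖^2)
    (fun q _ => sq_nonneg _) (Finset.mem_univ p)))
  rw [Real.sqrt_sq (norm_nonneg _)]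

lemma normE_le {x : EuclideanSpace ℂ (k × k)} {R : ℝ} (hR : 0 ≤ R) (h : ∀ p, ‖x p‖ ≤ R) :
    ‖x‖ ≤ Real.sqrt (Fintype.card (k × k)) * R := by
  rw [EuclideanSpace.norm_eq]
  have : ∑ p, ‖x p‖^2 ≤ (Fintype.card (k × k)) * R^2 := by
    calc ∑ p, ‖x p‖^2 ≤ ∑ _p : k × k, R^2 :=
          Finset.sum_le_sum fun p _ => by
            have := h p; nlinarith [norm_nonneg (x p)]
      _ = (Fintype.card (k × k)) * R^2 := by simp [Finset.card_univ, mul_comm]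
  refine le_trans (Real.sqrt_le_sqrt this) ?_
  rw [Real.sqrt_mul (by positivity), Real.sqrt_sq hR]

set_option linter.unusedSectionVars false

lemma contQuad (v : k → ℂ) :
    Continuous fun x : EuclideanSpace ℂ (k × k) => star v ⬝ᵥ (ofE x) *ᵥ v := by
  simp only [dotProduct, Matrix.mulVec, Pi.star_apply, ofE, Matrix.of_apply]
  exact continuous_finset_sum _ fun j _ => Continuous.mul continuous_const <|
    continuous_finset_sum _ fun i _ => ((contEval (j, i)).mul continuous_const)

lemma contTrace : Continuous fun x : EuclideanSpace ℂ (k × k) => (ofE x).trace := by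
  simp only [Matrix.trace, Matrix.diag, ofE, Matrix.of_apply]
  exact continuous_finset_sum _ fun i _ => contEval (i, i)

lemma psdE_closed : IsClosed {x : EuclideanSpace ℂ (k × k) | (ofE x).PosSemidef} := by
  have hset : {x : EuclideanSpace ℂ (k × k) | (ofE x).PosSemidef} =
      (⋂ (p : k × k), {x | star (x (p.2, p.1)) = x p}) ∩
      (⋂ v : k → ℂ, {x | 0 ≤ (star v ⬝ᵥ (ofE x) *ᵥ v).re} ∩
        {x | (star v ⬝ᵥ (ofE x) *ᵥ v).im = 0}) := by
    ext x
    simp only [Set.mem_setOf_eq, Set.mem_inter_iff, Set.mem_iInter, Matrix.posSemidef_iff_dotProduct_mulVec]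
    constructor
    · rintro ⟨hherm, hq⟩
      refine ⟨fun p => ?_, fun v => ?_⟩
      · have := congrFun (congrFun hherm.eq p.1) p.2
        simpa [Matrix.conjTranspose_apply, ofE] using this
      · have := hq v
        rw [Complex.le_def] at this
        exact ⟨by simpa using this.1, by simpa using this.2.symm⟩
    · rintro ⟨hherm, hq⟩
      refine ⟨?_, fun v => ?_⟩
      · ext i j
        have := hherm (i, j)
        simpa [Matrix.conjTranspose_apply, ofE] using this
      · rw [Complex.le_def]
        exact ⟨by simpa using (hq v).1, by simpa using (hq v).2.symm⟩
  rw [hset]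
  refine IsClosed.inter (isClosed_iInter fun p => ?_) (isClosed_iInter fun v => ?_)
  · exact isClosed_eq (continuous_star.comp (contEval (p.2, p.1))) (contEval p)
  · exact IsClosed.inter
      (isClosed_le continuous_const (Complex.continuous_re.comp (contQuad v)))
      (isClosed_eq (Complex.continuous_im.comp (contQuad v)) continuous_const)

end aux

section pt
variable {m n : ℕ}

lemma pt_pt (A : Matrix (Fin m × Fin n) (Fin m × Fin n) ℂ) : ptranspose (ptranspose A) = A := by
  ext ⟨i, j⟩ ⟨k, l⟩; rfl

lemma pt_add (A B : Matrix (Fin m × Fin n) (Fin m × Fin n) ℂ) :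
    ptranspose (A + B) = ptranspose A + ptranspose B := rfl

lemma pt_smul (c : ℂ) (A : Matrix (Fin m × Fin n) (Fin m × Fin n) ℂ) :
    ptranspose (c • A) = c • ptranspose A := rfl

lemma pt_zero : ptranspose (0 : Matrix (Fin m × Fin n) (Fin m × Fin n) ℂ) = 0 := rfl

lemma pt_herm {A : Matrix (Fin m × Fin n) (Fin m × Fin n) ℂ} (hA : A.IsHermitian) :
    (ptranspose A).IsHermitian := by
  ext ⟨i1, i2⟩ ⟨j1, j2⟩
  simp only [Matrix.conjTranspose_apply, ptranspose]
  exact congrFun (congrFun hA.eq _) _ |>.symm ▸ by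
    have := hA.apply (i1, j2) (j1, i2)
    simpa [ptranspose] using this

lemma pt_trace (A : Matrix (Fin m × Fin n) (Fin m × Fin n) ℂ) :
    (ptranspose A).trace = A.trace := by
  simp [Matrix.trace, Matrix.diag, ptranspose]

lemma pt_trace_mul (A B : Matrix (Fin m × Fin n) (Fin m × Fin n) ℂ) :
    (ptranspose A * B).trace = (A * ptranspose B).trace := by
  simp only [Matrix.trace, Matrix.diag, Matrix.mul_apply, ptranspose]
  rw [← Finset.sum_product', ← Finset.sum_product']
  refine Finset.sum_nbij' (fun p => ((p.1.1, p.2.2), (p.2.1, p.1.2)))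
    (fun p => ((p.1.1, p.2.2), (p.2.1, p.1.2))) ?_ ?_ ?_ ?_ ?_ <;>
    rintro ⟨⟨a1, a2⟩, ⟨b1, b2⟩⟩ - <;> simp

end pt


section cone
variable {m n : ℕ}

def ptE : EuclideanSpace ℂ ((Fin m × Fin n) × (Fin m × Fin n)) →ₗ[ℂ]
    EuclideanSpace ℂ ((Fin m × Fin n) × (Fin m × Fin n)) :=
  ⟨⟨fun y => WithLp.toLp 2 (fun p : (Fin m × Fin n) × (Fin m × Fin n) =>
    y ((p.1.1, p.2.2), (p.2.1, p.1.2))), fun _ _ => rfl⟩, fun _ _ => rfl⟩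

lemma ptE_toE (B : Matrix (Fin m × Fin n) (Fin m × Fin n) ℂ) :
    ptE (toE B) = toE (ptranspose B) := rfl

noncomputable def pptCone (m n : ℕ) : ConvexCone ℝ (EuclideanSpace ℂ ((Fin m × Fin n) × (Fin m × Fin n))) where
  carrier := {x | ∃ A B : Matrix (Fin m × Fin n) (Fin m × Fin n) ℂ,
    A.PosSemidef ∧ B.PosSemidef ∧ x = toE (A + ptranspose B)}
  smul_mem' := by
    rintro c hc x ⟨A, B, hA, hB, rfl⟩
    refine ⟨(c : ℂ) • A, (c : ℂ) • B, aux_smul_psd hA hc.le, aux_smul_psd hB hc.le, ?_⟩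
    refine PiLp.ext fun p => ?_
    show c • ((A + ptranspose B) p.1 p.2) = ((c:ℂ) • A + ptranspose ((c:ℂ) • B)) p.1 p.2
    simp [ptranspose, Matrix.add_apply, Matrix.smul_apply, Complex.real_smul, mul_add]
  add_mem' := by
    rintro x ⟨A, B, hA, hB, rfl⟩ y ⟨A', B', hA', hB', rfl⟩
    refine ⟨A + A', B + B', hA.add hA', hB.add hB', ?_⟩
    rw [← toE_add]
    congr 1
    rw [pt_add, add_add_add_comm]

lemma mem_pptCone_toE {X : Matrix (Fin m × Fin n) (Fin m × Fin n) ℂ} :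
    toE X ∈ pptCone m n ↔ ∃ A B : Matrix (Fin m × Fin n) (Fin m × Fin n) ℂ,
      A.PosSemidef ∧ B.PosSemidef ∧ X = A + ptranspose B := by
  constructor
  · rintro ⟨A, B, hA, hB, h⟩
    exact ⟨A, B, hA, hB, by
      have := congrArg ofE h
      simpa [ofE_toE] using this⟩
  · rintro ⟨A, B, hA, hB, rfl⟩
    exact ⟨A, B, hA, hB, rfl⟩

lemma pptCone_closed : IsClosed (pptCone m n : Set (EuclideanSpace ℂ ((Fin m × Fin n) × (Fin m × Fin n)))) := by
  apply isClosed_of_closure_subset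
  intro x hx
  set κ : ℝ := (Fintype.card (Fin m × Fin n) : ℝ)
  set R : ℝ := κ * (‖x‖ + 1) with hR
  have hκ : (0:ℝ) ≤ κ := by positivity
  have hR0 : 0 ≤ R := by positivity
  set R2 : ℝ := Real.sqrt (Fintype.card ((Fin m × Fin n) × (Fin m × Fin n))) * R with hR2
  -- the compact set S
  set S : Set (EuclideanSpace ℂ ((Fin m × Fin n) × (Fin m × Fin n)) ×
      EuclideanSpace ℂ ((Fin m × Fin n) × (Fin m × Fin n))) :=
    {ab | (ofE ab.1).PosSemidef ∧ (ofE ab.2).PosSemidef ∧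
      ((ofE ab.1).trace).re + ((ofE ab.2).trace).re ≤ R} with hS
  have hSclosed : IsClosed S := by
    have hSeq : S = ({ab : EuclideanSpace ℂ ((Fin m × Fin n) × (Fin m × Fin n)) ×
        EuclideanSpace ℂ ((Fin m × Fin n) × (Fin m × Fin n)) | (ofE ab.1).PosSemidef} ∩
        {ab | (ofE ab.2).PosSemidef}) ∩
        {ab | ((ofE ab.1).trace).re + ((ofE ab.2).trace).re ≤ R} := by
      ext ⟨a, b⟩
      simp [hS, Set.mem_setOf_eq, and_assoc]
    rw [hSeq]
    refine IsClosed.inter (IsClosed.inter (psdE_closed.preimage continuous_fst)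
      (psdE_closed.preimage continuous_snd)) (isClosed_le ?_ continuous_const)
    exact ((Complex.continuous_re.comp (contTrace.comp continuous_fst)).add
      (Complex.continuous_re.comp (contTrace.comp continuous_snd)))
  have hSsub : S ⊆ Metric.closedBall 0 R2 ×ˢ Metric.closedBall 0 R2 := by
    rintro ⟨a, b⟩ ⟨ha, hb, htr⟩
    have h1 : ((ofE a).trace).re ≤ R := by
      have := aux_trace_nonneg hb
      rw [Complex.le_def] at this
      simp only [Complex.zero_re] at this
      linarith [this.1]
    have h2 : ((ofE b).trace).re ≤ R := by
      have := aux_trace_nonneg ha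
      rw [Complex.le_def] at this
      simp only [Complex.zero_re] at this
      linarith [this.1]
    refine ⟨?_, ?_⟩
    · rw [Metric.mem_closedBall, dist_zero_right]
      refine normE_le hR0 fun p => ?_
      exact le_trans (aux_entry_bound ha p.1 p.2) h1
    · rw [Metric.mem_closedBall, dist_zero_right]
      refine normE_le hR0 fun p => ?_
      exact le_trans (aux_entry_bound hb p.1 p.2) h2
  have hScompact : IsCompact S :=
    ((isCompact_closedBall _ _).prod (isCompact_closedBall _ _)).of_isClosed_subset
      hSclosed hSsub
  -- the continuous map g
  set g : EuclideanSpace ℂ ((Fin m × Fin n) × (Fin m × Fin n)) ×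
      EuclideanSpace ℂ ((Fin m × Fin n) × (Fin m × Fin n)) →
      EuclideanSpace ℂ ((Fin m × Fin n) × (Fin m × Fin n)) :=
    fun ab => ab.1 + ptE ab.2 with hg
  have hgcont : Continuous g :=
    continuous_fst.add ((ptE.continuous_of_finiteDimensional).comp continuous_snd)
  have himg : g '' S ⊆ (pptCone m n : Set _) := by
    rintro - ⟨⟨a, b⟩, ⟨ha, hb, -⟩, rfl⟩
    exact ⟨ofE a, ofE b, ha, hb, rfl⟩
  -- x is in the closure of pptCone ∩ closedBall x 1
  have hx2 : x ∈ closure ((pptCone m n : Set _) ∩ Metric.closedBall x 1) := by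
    rw [Metric.mem_closure_iff]
    intro ε hε
    rw [Metric.mem_closure_iff] at hx
    obtain ⟨y, hyK, hyd⟩ := hx (min ε 1) (by positivity)
    exact ⟨y, ⟨hyK, by
      rw [Metric.mem_closedBall, dist_comm]
      exact le_trans hyd.le (min_le_right _ _)⟩, lt_of_lt_of_le hyd (min_le_left _ _)⟩
  -- pptCone ∩ ball ⊆ g '' S
  have hsub2 : (pptCone m n : Set _) ∩ Metric.closedBall x 1 ⊆ g '' S := by
    rintro y ⟨⟨A, B, hA, hB, rfl⟩, hball⟩
    refine ⟨(toE A, toE B), ⟨?_, ?_, ?_⟩, ?_⟩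
    · rw [ofE_toE]; exact hA
    · rw [ofE_toE]; exact hB
    · rw [ofE_toE, ofE_toE]
      have htr : A.trace + B.trace = (ofE (toE (A + ptranspose B))).trace := by
        rw [ofE_toE, Matrix.trace_add, pt_trace]
      have hnorm : ‖toE (A + ptranspose B)‖ ≤ ‖x‖ + 1 := by
        rw [Metric.mem_closedBall] at hball
        calc ‖toE (A + ptranspose B)‖
            = ‖x + (toE (A + ptranspose B) - x)‖ := by rw [show x + (toE (A + ptranspose B) - x) = toE (A + ptranspose B) from by abel]
          _ ≤ ‖x‖ + ‖toE (A + ptranspose B) - x‖ := norm_add_le _ _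
          _ ≤ ‖x‖ + 1 := by
              rw [← dist_eq_norm]
              exact (add_le_add_iff_left _).mpr hball
      have htrre : ((ofE (toE (A + ptranspose B))).trace).re ≤ R := by
        set y := toE (A + ptranspose B)
        calc ((ofE y).trace).re ≤ ‖(ofE y).trace‖ := Complex.re_le_norm _
          _ ≤ ∑ i : Fin m × Fin n, ‖y (i, i)‖ := by
              rw [Matrix.trace]
              exact norm_sum_le _ _
          _ ≤ ∑ _i : Fin m × Fin n, ‖y‖ :=
              Finset.sum_le_sum fun i _ => normE_apply_le y (i, i)
          _ = κ * ‖y‖ := by simp [κ, Finset.card_univ, mul_comm]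
          _ ≤ κ * (‖x‖ + 1) := by
              apply mul_le_mul_of_nonneg_left hnorm hκ
          _ = R := rfl
      calc (A.trace).re + (B.trace).re = ((ofE (toE (A + ptranspose B))).trace).re := by
            rw [← htr]; simp [Complex.add_re]
        _ ≤ R := htrre
    · show toE A + ptE (toE B) = toE (A + ptranspose B)
      rw [ptE_toE, ← toE_add]
  have hcl : closure ((pptCone m n : Set _) ∩ Metric.closedBall x 1) ⊆ g '' S := by
    rw [← (hScompact.image hgcont).isClosed.closure_eq]
    exact closure_mono hsub2
  exact himg (hcl hx2)

end cone
/-- The dual cone of the set of PPT states equals `{Y₁ + Y₂^Γ : Y₁, Y₂ ⪰ 0}`. -/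
theorem stmt_13 (m n : ℕ) :
    {Y : Matrix (Fin m × Fin n) (Fin m × Fin n) ℂ | Y.IsHermitian ∧
        ∀ X : Matrix (Fin m × Fin n) (Fin m × Fin n) ℂ,
          X.PosSemidef → X.trace = 1 → (ptranspose X).PosSemidef →
          0 ≤ ((X * Y).trace).re} =
    {Y : Matrix (Fin m × Fin n) (Fin m × Fin n) ℂ |
        ∃ Y₁ Y₂, Y₁.PosSemidef ∧ Y₂.PosSemidef ∧ Y = Y₁ + ptranspose Y₂} := by
  letI : InnerProductSpace ℝ (EuclideanSpace ℂ ((Fin m × Fin n) × (Fin m × Fin n))) :=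
    InnerProductSpace.rclikeToReal ℂ _
  have rinner : ∀ u v : EuclideanSpace ℂ ((Fin m × Fin n) × (Fin m × Fin n)),
      (inner ℝ u v : ℝ) = (((ofE u)ᴴ * (ofE v)).trace).re := by
    intro u v
    have h0 : (inner ℂ u v : ℂ) = ∑ p, (starRingEnd ℂ) (u p) * v p := by
      rw [PiLp.inner_apply]
      refine Finset.sum_congr rfl fun p _ => ?_
      rw [RCLike.inner_apply]; ring
    have h1 : (inner ℝ u v : ℝ) = (inner ℂ u v : ℂ).re := rfl
    have h2 : (((ofE u)ᴴ * (ofE v)).trace) =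
        ∑ p : (Fin m × Fin n) × (Fin m × Fin n), (starRingEnd ℂ) (u p) * v p := by
      rw [Matrix.trace]
      simp only [Matrix.diag, Matrix.mul_apply, Matrix.conjTranspose_apply, ofE,
        Matrix.of_apply]
      rw [Finset.sum_comm]
      exact (Fintype.sum_prod_type (f := fun p : (Fin m × Fin n) × (Fin m × Fin n) =>
        (starRingEnd ℂ) (u p) * v p)).symm
    rw [h1, h0, h2]
  ext Y
  simp only [Set.mem_setOf_eq]
  constructor
  · rintro ⟨hY, hdual⟩
    by_contra hnot
    have hmem : toE Y ∉ pptCone m n := fun hmem => hnot (mem_pptCone_toE.mp hmem)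
    let C : ProperCone ℝ (EuclideanSpace ℂ ((Fin m × Fin n) × (Fin m × Fin n))) :=
      { toSubmodule := (pptCone m n).toPointedCone
          ⟨0, 0, Matrix.PosSemidef.zero, Matrix.PosSemidef.zero, by rw [pt_zero, add_zero]; rfl⟩
        isClosed' := pptCone_closed }
    obtain ⟨y, h1, h2⟩ := ProperCone.hyperplane_separation' C hmem
    set W := ofE y with hW
    have hIn : ∀ X : Matrix (Fin m × Fin n) (Fin m × Fin n) ℂ,
        toE X ∈ pptCone m n → 0 ≤ ((Xᴴ * W).trace).re := by
      intro X hX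
      have := h1 _ hX
      rwa [rinner] at this
    have h2' : ((Wᴴ * Y).trace).re < 0 := by
      have := h2
      rwa [real_inner_comm, rinner, ofE_toE] at this
    have hZherm : (W + Wᴴ).IsHermitian := by
      unfold Matrix.IsHermitian
      rw [Matrix.conjTranspose_add, Matrix.conjTranspose_conjTranspose, add_comm]
    have key : ∀ M : Matrix (Fin m × Fin n) (Fin m × Fin n) ℂ, M.IsHermitian →
        ((M * (W + Wᴴ)).trace).re = 2 * ((M * W).trace).re := by
      intro M hM
      rw [Matrix.mul_add, Matrix.trace_add, Complex.add_re]
      have e : (M * Wᴴ) = (W * Mᴴ)ᴴ := by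
        rw [Matrix.conjTranspose_mul, Matrix.conjTranspose_conjTranspose]
      rw [e, Matrix.trace_conjTranspose, hM.eq, Matrix.trace_mul_comm]
      simp only [Complex.star_def, Complex.conj_re]
      ring
    have hZpsd : (W + Wᴴ).PosSemidef := by
      refine aux_psd_of_trace_test hZherm fun X hX => ?_
      have hmem : toE X ∈ pptCone m n :=
        ⟨X, 0, hX, Matrix.PosSemidef.zero, by rw [pt_zero, add_zero]⟩
      have h := hIn X hmem
      rw [hX.1.eq] at h
      rw [key X hX.1]
      linarith
    have hPTpsd : (ptranspose (W + Wᴴ)).PosSemidef := by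
      refine aux_psd_of_trace_test (pt_herm hZherm) fun B hB => ?_
      have hmem : toE (ptranspose B) ∈ pptCone m n :=
        ⟨0, B, Matrix.PosSemidef.zero, hB, by rw [zero_add]⟩
      have h := hIn _ hmem
      rw [(pt_herm hB.1).eq] at h
      rw [← pt_trace_mul, key _ (pt_herm hB.1)]
      linarith
    have hYneg : ((Y * (W + Wᴴ)).trace).re < 0 := by
      have e : star ((Wᴴ * Y).trace) = (Y * W).trace := by
        rw [← Matrix.trace_conjTranspose, Matrix.conjTranspose_mul,
          Matrix.conjTranspose_conjTranspose, hY.eq]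
      have e2 : ((Y * W).trace).re = ((Wᴴ * Y).trace).re := by
        rw [← e]; simp [Complex.star_def]
      rw [key Y hY]
      linarith
    have htrnn : 0 ≤ (W + Wᴴ).trace.re := by
      simpa using (Complex.le_def.mp (aux_trace_nonneg hZpsd)).1
    have htr0 : 0 < (W + Wᴴ).trace.re := by
      rcases htrnn.lt_or_eq with h | h
      · exact h
      · exfalso
        have hz : (W + Wᴴ).trace = 0 := by rw [aux_trace_re hZpsd, ← h]; simp
        have := aux_trace_zero hZpsd hz
        rw [this] at hYneg
        simp at hYneg
    set t := (W + Wᴴ).trace.re with ht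
    set X₀ := ((t⁻¹ : ℝ) : ℂ) • (W + Wᴴ) with hX₀
    have hX₀psd : X₀.PosSemidef := aux_smul_psd hZpsd (inv_nonneg.mpr htr0.le)
    have hX₀tr : X₀.trace = 1 := by
      rw [hX₀, Matrix.trace_smul, smul_eq_mul, aux_trace_re hZpsd, ← ht,
        ← Complex.ofReal_mul, inv_mul_cancel₀ htr0.ne']
      simp
    have hX₀pt : (ptranspose X₀).PosSemidef := by
      rw [hX₀, pt_smul]
      exact aux_smul_psd hPTpsd (inv_nonneg.mpr htr0.le)
    have hfinal := hdual X₀ hX₀psd hX₀tr hX₀pt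
    have e3 : (X₀ * Y).trace = ((t⁻¹ : ℝ) : ℂ) * (Y * (W + Wᴴ)).trace := by
      rw [hX₀, Matrix.smul_mul, Matrix.trace_smul, smul_eq_mul, Matrix.trace_mul_comm]
    rw [e3] at hfinal
    rw [Complex.re_ofReal_mul] at hfinal
    have hneg := mul_neg_of_pos_of_neg (inv_pos.mpr htr0) hYneg
    linarith
  · rintro ⟨Y₁, Y₂, hY₁, hY₂, rfl⟩
    refine ⟨hY₁.1.add (pt_herm hY₂.1), fun X hX _htr hpt => ?_⟩
    have e1 : (X * (Y₁ + ptranspose Y₂)).trace = (X * Y₁).trace + (X * ptranspose Y₂).trace := by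
      rw [Matrix.mul_add, Matrix.trace_add]
    have e2 : (X * ptranspose Y₂).trace = (ptranspose X * Y₂).trace := (pt_trace_mul X Y₂).symm
    have n1 := aux_trace_mul_nonneg hX hY₁
    have n2 := aux_trace_mul_nonneg hpt hY₂
    rw [Complex.le_def] at n1 n2
    rw [e1, e2, Complex.add_re]
    have := n1.1
    have := n2.1
    simp only [Complex.zero_re] at *
    linarith
end

section
/- Let P be the orthogonal projection onto a subspace S ⊆ ℂ^m ⊗ ℂ^n such that no PPT state has range contained in S. Then there exists a constant c < 1 such that Tr(Pσ) ≤ c for all PPT states σ. -/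
open Matrix Complex Finset
open scoped ComplexOrder

section aux
variable {ι : Type*} [Fintype ι] [DecidableEq ι]

lemma my_diag_nonneg {σ : Matrix ι ι ℂ} (hσ : σ.PosSemidef) (i : ι) : 0 ≤ σ i i := by
  simpa [← Pi.single_star, single_dotProduct, mulVec_single] using hσ.dotProduct_mulVec_nonneg (Pi.single i 1)

lemma my_quad {σ : Matrix ι ι ℂ} (hσ : σ.PosSemidef) {i j : ι} (hij : i ≠ j) :
    2 * Complex.normSq (σ i j) ≤ (σ i i).re * Complex.normSq (σ i j) + (σ j j).re := by
  have h := hσ.dotProduct_mulVec_nonneg (Pi.single i (σ i j) + Pi.single j (-1))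
  have hji : star (σ i j) = σ j i := hσ.1.apply j i
  have key : star (Pi.single i (σ i j) + Pi.single j (-1)) ⬝ᵥ
      σ *ᵥ (Pi.single i (σ i j) + Pi.single j (-1))
      = σ i i * (Complex.normSq (σ i j) : ℂ) - 2 * (Complex.normSq (σ i j) : ℂ) + σ j j := by
    simp [star_add, ← Pi.single_star, add_dotProduct, mulVec_add, mulVec_single,
      single_dotProduct, Pi.add_apply, Pi.single_eq_same, Pi.single_eq_of_ne hij,
      Pi.single_eq_of_ne hij.symm, mul_add, mul_comm]
    rw [← hji]
    simp only [Complex.star_def]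
    rw [← Complex.mul_conj]
    ring
  rw [key, Complex.le_def] at h
  have h1 := h.1
  simp [Complex.add_re, Complex.sub_re, Complex.mul_re, Complex.ofReal_re,
    Complex.ofReal_im] at h1
  linarith

lemma my_trace_nonneg {σ : Matrix ι ι ℂ} (hσ : σ.PosSemidef) : 0 ≤ σ.trace :=
  Finset.sum_nonneg fun i _ => my_diag_nonneg hσ i

lemma my_psd_trace_zero {σ : Matrix ι ι ℂ} (hσ : σ.PosSemidef) (h : σ.trace = 0) :
    σ = 0 := by
  have hre : ∀ i, (σ i i).re = 0 := by
    have hsum : ∑ i, (σ i i).re = 0 := by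
      have := congrArg Complex.re h
      simpa [Matrix.trace, Matrix.diag, Complex.re_sum] using this
    intro i
    have := (Finset.sum_eq_zero_iff_of_nonneg
      (fun i _ => (Complex.nonneg_iff.1 (my_diag_nonneg hσ i)).1)).1 hsum i (Finset.mem_univ i)
    exact this
  ext i j
  rcases eq_or_ne i j with rfl | hij
  · have h0 := my_diag_nonneg hσ i
    have him := (Complex.nonneg_iff.1 h0).2
    simp [Complex.ext_iff, hre i, ← him]
  · have hq := my_quad hσ hij
    rw [hre i, hre j] at hq
    have : Complex.normSq (σ i j) = 0 := by nlinarith [Complex.normSq_nonneg (σ i j)]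
    simpa using Complex.normSq_eq_zero.1 this

open scoped MatrixOrder in
noncomputable def Matrix.PosSemidef.sqrt {σ : Matrix ι ι ℂ} (_hσ : σ.PosSemidef) :
    Matrix ι ι ℂ :=
  CFC.sqrt σ

open scoped MatrixOrder in
lemma Matrix.PosSemidef.sqrt_mul_self {σ : Matrix ι ι ℂ} (hσ : σ.PosSemidef) :
    hσ.sqrt * hσ.sqrt = σ :=
  CFC.sqrt_mul_sqrt_self σ hσ.nonneg

open scoped MatrixOrder in
lemma Matrix.PosSemidef.posSemidef_sqrt {σ : Matrix ι ι ℂ} (hσ : σ.PosSemidef) :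
    hσ.sqrt.PosSemidef :=
  nonneg_iff_posSemidef.1 (CFC.sqrt_nonneg σ)

end aux

theorem stmt_15 (m n : ℕ) (S : Submodule ℂ (Fin m × Fin n → ℂ))
    (P : Matrix (Fin m × Fin n) (Fin m × Fin n) ℂ)
    -- `P` is the orthogonal projection onto `S`:
    (hP : P.IsHermitian) (hP2 : P * P = P)
    (hPrange : ∀ v, P *ᵥ v ∈ S) (hPfix : ∀ v ∈ S, P *ᵥ v = v)
    -- no PPT state has range contained in `S`:
    (hS : ∀ σ : Matrix (Fin m × Fin n) (Fin m × Fin n) ℂ,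
      σ.PosSemidef → σ.trace = 1 → (ptranspose σ).PosSemidef →
      ¬ (∀ v, σ *ᵥ v ∈ S)) :
    ∃ c : ℝ, c < 1 ∧
      ∀ σ : Matrix (Fin m × Fin n) (Fin m × Fin n) ℂ,
        σ.PosSemidef → σ.trace = 1 → (ptranspose σ).PosSemidef →
        ((P * σ).trace).re ≤ c := by
  set K : Set (Matrix (Fin m × Fin n) (Fin m × Fin n) ℂ) :=
    {σ | σ.PosSemidef ∧ σ.trace = 1 ∧ (ptranspose σ).PosSemidef} with hKdef
  have hcont : Continuous fun σ : Matrix (Fin m × Fin n) (Fin m × Fin n) ℂ =>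
      ((P * σ).trace).re :=
    Complex.continuous_re.comp ((continuous_const.matrix_mul continuous_id).matrix_trace)
  -- closedness of the PSD cone
  have hclosednn : IsClosed {z : ℂ | 0 ≤ z} := by
    have : {z : ℂ | 0 ≤ z} = Complex.re ⁻¹' Set.Ici 0 ∩ Complex.im ⁻¹' {0} := by
      ext z; simp [Complex.nonneg_iff, eq_comm]
    rw [this]
    exact (isClosed_Ici.preimage Complex.continuous_re).inter
      (isClosed_singleton.preimage Complex.continuous_im)
  have hclosed_psd : IsClosed {σ : Matrix (Fin m × Fin n) (Fin m × Fin n) ℂ | σ.PosSemidef} := by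
    have heq : {σ : Matrix (Fin m × Fin n) (Fin m × Fin n) ℂ | σ.PosSemidef}
        = {σ | σᴴ = σ} ∩ ⋂ x : (Fin m × Fin n) → ℂ, {σ | 0 ≤ star x ⬝ᵥ σ *ᵥ x} := by
      ext σ
      constructor
      · rintro ⟨h1, h2⟩; exact ⟨h1, Set.mem_iInter.2 fun x => PosSemidef.dotProduct_mulVec_nonneg ⟨h1, h2⟩ x⟩
      · rintro ⟨h1, h2⟩; exact PosSemidef.of_dotProduct_mulVec_nonneg h1 fun x => Set.mem_iInter.1 h2 x
    rw [heq]
    refine (isClosed_eq continuous_id.matrix_conjTranspose continuous_id).inter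
      (isClosed_iInter fun x => ?_)
    exact hclosednn.preimage
      (continuous_const.dotProduct (continuous_id.matrix_mulVec continuous_const))
  have hptc : Continuous (ptranspose (m := m) (n := n)) :=
    continuous_matrix fun a b => (continuous_apply _).comp (continuous_apply _)
  have hKclosed : IsClosed K := by
    have : K = {σ : Matrix (Fin m × Fin n) (Fin m × Fin n) ℂ | σ.PosSemidef}
        ∩ ({σ | σ.trace = 1} ∩ ptranspose ⁻¹' {σ | σ.PosSemidef}) := rfl
    rw [this]
    exact hclosed_psd.inter ((isClosed_eq continuous_id.matrix_trace continuous_const).inter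
      (hclosed_psd.preimage hptc))
  -- boundedness / compactness
  have hCcomp : IsCompact {σ : Matrix (Fin m × Fin n) (Fin m × Fin n) ℂ |
      ∀ i j, σ i j ∈ Metric.closedBall (0 : ℂ) 1} := by
    have h1 := isCompact_univ_pi (ι := Fin m × Fin n)
      fun _ => isCompact_univ_pi (ι := Fin m × Fin n)
        fun _ => isCompact_closedBall (0 : ℂ) 1
    have heq : {σ : Matrix (Fin m × Fin n) (Fin m × Fin n) ℂ |
        ∀ i j, σ i j ∈ Metric.closedBall (0 : ℂ) 1}
        = Set.univ.pi fun _ : Fin m × Fin n =>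
            Set.univ.pi fun _ : Fin m × Fin n => Metric.closedBall (0 : ℂ) 1 := by
      ext σ
      constructor
      · intro h p _ q _; exact h p q
      · intro h i j; exact h i (Set.mem_univ i) j (Set.mem_univ j)
    rw [heq]
    exact h1
  have hsub : K ⊆ {σ : Matrix (Fin m × Fin n) (Fin m × Fin n) ℂ |
      ∀ i j, σ i j ∈ Metric.closedBall (0 : ℂ) 1} := by
    rintro σ ⟨hpsd, htr, -⟩ i j
    have hdiagle : ∀ k, (σ k k).re ≤ 1 := by
      intro k
      have hsum : ∑ l, (σ l l).re = 1 := by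
        have := congrArg Complex.re htr
        simpa [Matrix.trace, Matrix.diag, Complex.re_sum] using this
      calc (σ k k).re ≤ ∑ l, (σ l l).re :=
            Finset.single_le_sum
              (fun l _ => (Complex.nonneg_iff.1 (my_diag_nonneg hpsd l)).1)
              (Finset.mem_univ k)
        _ = 1 := hsum
    simp only [Metric.mem_closedBall, dist_zero_right]
    rcases eq_or_ne i j with rfl | hij
    · have h0 := my_diag_nonneg hpsd i
      rw [Complex.eq_re_of_ofReal_le h0]
      simpa using abs_le_abs_of_nonneg (Complex.nonneg_iff.1 h0).1 (hdiagle i) |>.trans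
        (by simp) |>.trans_eq rfl
    · have hq := my_quad hpsd hij
      have hnsq : Complex.normSq (σ i j) ≤ 1 := by
        nlinarith [Complex.normSq_nonneg (σ i j), hdiagle i, hdiagle j,
          (Complex.nonneg_iff.1 (my_diag_nonneg hpsd i)).1]
      have : ‖σ i j‖ ^ 2 = Complex.normSq (σ i j) := by
        exact Complex.sq_norm _
      nlinarith [norm_nonneg (σ i j)]
  have hKcomp : IsCompact K := hCcomp.of_isClosed_subset hKclosed hsub
  rcases K.eq_empty_or_nonempty with hemp | hne
  · refine ⟨0, one_pos, fun σ h1 h2 h3 => absurd (show σ ∈ K from ⟨h1, h2, h3⟩) ?_⟩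
    simp [hemp]
  · obtain ⟨σ₀, hσ₀K, hmax⟩ := hKcomp.exists_isMaxOn hne hcont.continuousOn
    refine ⟨((P * σ₀).trace).re, ?_, fun σ h1 h2 h3 => (isMaxOn_iff.1 hmax) σ ⟨h1, h2, h3⟩⟩
    by_contra hc
    push_neg at hc
    obtain ⟨hpsd, htr, hpt⟩ := hσ₀K
    set Q : Matrix (Fin m × Fin n) (Fin m × Fin n) ℂ := 1 - P with hQdef
    have hQH : Qᴴ = Q := by
      simp [hQdef, conjTranspose_sub, hP.eq]
    have hQQ : Q * Q = Q := by
      rw [hQdef, sub_mul, one_mul, mul_sub, mul_one, hP2, sub_self, sub_zero]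
    have hT : (Q * σ₀ * Q).PosSemidef := by
      have := hpsd.mul_mul_conjTranspose_same Q
      rwa [hQH] at this
    have htrT : σ₀.trace = (P * σ₀).trace + (Q * σ₀ * Q).trace := by
      have h1 : (Q * σ₀ * Q).trace = (Q * σ₀).trace := by
        rw [Matrix.trace_mul_cycle, hQQ]
      rw [h1, ← Matrix.trace_add, ← Matrix.add_mul]
      simp [hQdef]
    have htT := my_trace_nonneg hT
    have h1 : (1 : ℝ) = ((P * σ₀).trace).re + ((Q * σ₀ * Q).trace).re := by
      have := congrArg Complex.re htrT
      rw [htr] at this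
      simpa using this
    have hre0 : ((Q * σ₀ * Q).trace).re = 0 :=
      le_antisymm (by linarith) (Complex.nonneg_iff.1 htT).1
    have hT0 : (Q * σ₀ * Q).trace = 0 :=
      Complex.ext hre0 ((Complex.nonneg_iff.1 htT).2).symm
    have hTzero : Q * σ₀ * Q = 0 := my_psd_trace_zero hT hT0
    have hsq := hpsd.sqrt_mul_self
    have hsH : (hpsd.sqrt)ᴴ = hpsd.sqrt := hpsd.posSemidef_sqrt.1
    have hQR : Q * hpsd.sqrt = 0 := by
      refine Matrix.self_mul_conjTranspose_eq_zero.1 ?_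
      rw [conjTranspose_mul, hsH, hQH]
      calc Q * hpsd.sqrt * (hpsd.sqrt * Q)
          = Q * (hpsd.sqrt * hpsd.sqrt) * Q := by
            rw [Matrix.mul_assoc, Matrix.mul_assoc, Matrix.mul_assoc]
        _ = Q * σ₀ * Q := by rw [hsq]
        _ = 0 := hTzero
    have hQσ : Q * σ₀ = 0 := by
      rw [← hsq, ← Matrix.mul_assoc, hQR, Matrix.zero_mul]
    have hPσ : P * σ₀ = σ₀ := by
      have h2 : (1 - P) * σ₀ = 0 := hQσ
      rw [sub_mul, one_mul, sub_eq_zero] at h2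
      exact h2.symm
    exact hS σ₀ hpsd htr hpt fun v => by
      rw [← hPσ, ← Matrix.mulVec_mulVec]; exact hPrange _
end

section
/- For all m, n ≥ 2, there exists a density matrix ρ ∈ M_m(ℂ) ⊗ M_n(ℂ) such that ρ^Γ has exactly (m−1)(n−1) negative eigenvalues (counted with multiplicity). -/
open Matrix Complex Finset Polynomial
open scoped ComplexOrder InnerProductSpace

noncomputable section
set_option linter.unusedSectionVars false

namespace Stmt18

variable {ι κ : Type*} [Fintype ι] [Fintype κ] [DecidableEq κ]

lemma real_neg_mul_pos {r : ℝ} (hr : r < 0) {z : ℂ} (hz : 0 < z) : (r : ℂ) * z < 0 := by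
  rw [Complex.lt_def] at hz ⊢
  obtain ⟨h1, h2⟩ := hz
  simp only [Complex.zero_re, Complex.zero_im] at h1 h2
  constructor
  · simp only [Complex.mul_re, Complex.ofReal_re, Complex.ofReal_im, Complex.zero_re, zero_mul,
      ← h2, mul_zero, sub_zero]
    nlinarith
  · simp [Complex.mul_im, ← h2]

/-- Gram matrices are positive definite when the family separates points. -/
lemma posDef_gram (w : κ → ι → ℂ)
    (hw : ∀ x : ι → ℂ, (∀ q, star (w q) ⬝ᵥ x = 0) → x = 0) :
    (Matrix.of fun i j => ∑ q, w q i * (starRingEnd ℂ) (w q j)).PosDef := by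
  set B : Matrix κ ι ℂ := Matrix.of fun q i => (starRingEnd ℂ) (w q i) with hB
  have hMB : (Matrix.of fun i j => ∑ q, w q i * (starRingEnd ℂ) (w q j)) = Bᴴ * B := by
    ext i j
    simp [Matrix.mul_apply, hB, Matrix.conjTranspose_apply, mul_comm]
  rw [hMB]
  have hquad : ∀ x : ι → ℂ, star x ⬝ᵥ ((Bᴴ * B) *ᵥ x) = star (B *ᵥ x) ⬝ᵥ (B *ᵥ x) := by
    intro x
    rw [← Matrix.mulVec_mulVec, Matrix.dotProduct_mulVec, Matrix.vecMul_conjTranspose]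
    simp
  refine Matrix.PosDef.of_dotProduct_mulVec_pos (Matrix.posSemidef_conjTranspose_mul_self B).1 fun x hx => ?_
  rw [hquad]
  rw [dotProduct_star_self_pos_iff]
  intro hBx
  apply hx
  apply hw
  intro q
  have := congrFun hBx q
  simpa [Matrix.mulVec, dotProduct, hB] using this


lemma dotProduct_sum' (v : ι → ℂ) (f : κ → ι → ℂ) :
    v ⬝ᵥ (∑ k, f k) = ∑ k, v ⬝ᵥ f k := by
  simp only [dotProduct, Finset.sum_apply, Finset.mul_sum]
  exact Finset.sum_comm

lemma sum_dotProduct' (f : κ → ι → ℂ) (v : ι → ℂ) :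
    (∑ k, f k) ⬝ᵥ v = ∑ k, f k ⬝ᵥ v := by
  simp only [dotProduct, Finset.sum_apply, Finset.sum_mul]
  exact Finset.sum_comm

lemma mulVec_sum' (A : Matrix ι ι ℂ) (f : κ → ι → ℂ) :
    A *ᵥ (∑ k, f k) = ∑ k, A *ᵥ f k := by
  have : A *ᵥ (∑ k, f k) = A.mulVecLin (∑ k, f k) := rfl
  rw [this, map_sum]
  rfl

/-- families with a diagonal Gram matrix with nonzero entries are linearly independent -/
lemma linearIndependent_of_dots (v : κ → ι → ℂ) (d : κ → ℂ) (hd : ∀ k, d k ≠ 0)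
    (hdot : ∀ k l, star (v k) ⬝ᵥ v l = if k = l then d k else 0) :
    LinearIndependent ℂ v := by
  rw [Fintype.linearIndependent_iff]
  intro g hg k
  have h := congrArg (fun y => star (v k) ⬝ᵥ y) hg
  simp only [dotProduct_zero] at h
  have h2 : star (v k) ⬝ᵥ (∑ i, g i • v i) = g k * d k := by
    have : (∑ i, g i • v i) = ∑ i, (fun i => g i • v i) i := rfl
    rw [this, dotProduct_sum']
    simp only [dotProduct_smul, hdot, smul_eq_mul, mul_ite, mul_zero,
      Finset.sum_ite_eq, Finset.mem_univ, if_true]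
  rw [h2] at h
  rcases mul_eq_zero.mp h with h' | h'
  · exact h'
  · exact absurd h' (hd k)

lemma quad_sum (A : Matrix ι ι ℂ) (v : κ → ι → ℂ) (μ d : κ → ℂ)
    (heig : ∀ k, A *ᵥ v k = μ k • v k)
    (hdot : ∀ k l, star (v k) ⬝ᵥ v l = if k = l then d k else 0)
    (c : κ → ℂ) :
    star (∑ k, c k • v k) ⬝ᵥ (A *ᵥ ∑ k, c k • v k)
      = ∑ k, (starRingEnd ℂ) (c k) * c k * (μ k * d k) := by
  have hAx : A *ᵥ (∑ k, c k • v k) = ∑ k, (c k * μ k) • v k := by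
    rw [mulVec_sum']
    apply Finset.sum_congr rfl
    intro k _
    rw [Matrix.mulVec_smul, heig k, smul_smul]
  rw [hAx]
  have hstar : star (∑ k, c k • v k) = ∑ k, (starRingEnd ℂ) (c k) • star (v k) := by
    rw [star_sum]
    congr 1
    funext k
    rw [star_smul]
    rfl
  rw [hstar, sum_dotProduct']
  apply Finset.sum_congr rfl
  intro k _
  rw [smul_dotProduct, dotProduct_sum']
  simp only [dotProduct_smul, hdot, smul_eq_mul, mul_ite, mul_one, mul_zero,
    Finset.sum_ite_eq, Finset.mem_univ, if_true]
  ring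

section Eps

variable [DecidableEq ι] [Nonempty ι]

lemma exists_eps {M : Matrix ι ι ℂ} (hM : M.PosDef) :
    ∃ ε : ℝ, 0 < ε ∧ (M - (ε : ℂ) • 1).PosSemidef := by
  have hH : M.IsHermitian := hM.1
  set ε : ℝ := Finset.univ.inf' Finset.univ_nonempty hH.eigenvalues with hε
  refine ⟨ε, ?_, ?_⟩
  · rw [hε, Finset.lt_inf'_iff]
    intro i _
    exact hM.eigenvalues_pos i
  · have hUs := hH.spectral_theorem
    set U : Matrix ι ι ℂ := (hH.eigenvectorUnitary : Matrix ι ι ℂ) with hU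
    have hUU : U * star U = 1 := (Matrix.mem_unitaryGroup_iff).mp hH.eigenvectorUnitary.2
    have key : M - (ε : ℂ) • 1
        = U * (Matrix.diagonal (fun i => ((hH.eigenvalues i - ε : ℝ) : ℂ))) * star U := by
      have h1 : (ε : ℂ) • (1 : Matrix ι ι ℂ) = U * ((ε : ℂ) • 1) * star U := by
        rw [Matrix.mul_smul, Matrix.mul_one, Matrix.smul_mul, hUU]
      have hD' : (Matrix.diagonal fun i => ((hH.eigenvalues i - ε : ℝ) : ℂ))
          = Matrix.diagonal (RCLike.ofReal ∘ hH.eigenvalues) - (ε : ℂ) • 1 := by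
        ext i j
        by_cases hij : i = j
        · subst hij
          simp [Matrix.diagonal_apply_eq, Matrix.one_apply_eq, Complex.ofReal_sub]
        · simp [Matrix.diagonal_apply_ne _ hij, Matrix.one_apply_ne hij]
      rw [hD', Matrix.mul_sub, Matrix.sub_mul, ← h1]
      exact congrArg (· - (ε : ℂ) • 1) hUs
    rw [key]
    have hd : Matrix.PosSemidef (Matrix.diagonal (fun i => ((hH.eigenvalues i - ε : ℝ) : ℂ))) := by
      rw [Matrix.posSemidef_diagonal_iff]
      intro i
      have : ε ≤ hH.eigenvalues i := Finset.inf'_le _ (Finset.mem_univ i)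
      rw [show ((0:ℂ) = ((0:ℝ):ℂ)) by norm_num, Complex.real_le_real]
      linarith
    have := hd.mul_mul_conjTranspose_same U
    rwa [← Matrix.star_eq_conjTranspose] at this

end Eps

section Inertia

variable [DecidableEq ι]

lemma inertia {A : Matrix ι ι ℂ} (hA : A.IsHermitian)
    (V W : Submodule ℂ (ι → ℂ))
    (hdim : Module.finrank ℂ ↥V + Module.finrank ℂ ↥W = Fintype.card ι)
    (hV : ∀ x ∈ V, x ≠ 0 → star x ⬝ᵥ (A *ᵥ x) < 0)
    (hW : ∀ x ∈ W, 0 ≤ star x ⬝ᵥ (A *ᵥ x)) :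
    (Finset.univ.filter fun i => hA.eigenvalues i < 0).card = Module.finrank ℂ ↥V := by
  classical
  set u : ι → (ι → ℂ) := fun i => ⇑(hA.eigenvectorBasis i) with hu
  have hdots : ∀ i j, star (u i) ⬝ᵥ u j = if i = j then 1 else 0 := by
    intro i j
    have h1 : ⟪(hA.eigenvectorBasis i), (hA.eigenvectorBasis j)⟫_ℂ = star (u i) ⬝ᵥ u j := by
        rw [EuclideanSpace.inner_eq_star_dotProduct, dotProduct_comm]
    rw [← h1, orthonormal_iff_ite.mp hA.eigenvectorBasis.orthonormal]
  have heig : ∀ i, A *ᵥ u i = ((hA.eigenvalues i : ℝ) : ℂ) • u i := by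
    intro i
    rw [hu]
    rw [hA.mulVec_eigenvectorBasis i]
    funext j
    simp [Pi.smul_apply, Complex.real_smul]
  set Neg : Finset ι := Finset.univ.filter (fun i => hA.eigenvalues i < 0) with hNeg
  have quadform : ∀ (s : Finset ι) (c : ι → ℂ),
      star (∑ i ∈ s, c i • u i) ⬝ᵥ (A *ᵥ ∑ i ∈ s, c i • u i)
        = ((∑ i ∈ s, Complex.normSq (c i) * hA.eigenvalues i : ℝ) : ℂ) := by
    intro s c
    have hsum : (∑ i ∈ s, c i • u i) = ∑ i : ι, (if i ∈ s then c i else 0) • u i := by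
      rw [← Finset.sum_filter_add_sum_filter_not Finset.univ (fun i => i ∈ s)
        (fun i => (if i ∈ s then c i else 0) • u i)]
      simp only [Finset.filter_univ_mem]
      rw [show (∑ i ∈ Finset.univ.filter (fun i => ¬ i ∈ s),
          (if i ∈ s then c i else 0) • u i) = 0 from ?_]
      · rw [add_zero]
        apply Finset.sum_congr rfl
        intro i hi
        rw [if_pos hi]
      · apply Finset.sum_eq_zero
        intro i hi
        rw [Finset.mem_filter] at hi
        rw [if_neg hi.2, zero_smul]
    rw [hsum, quad_sum A u (fun i => ((hA.eigenvalues i : ℝ) : ℂ)) (fun _ => 1) heig hdots]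
    rw [Complex.ofReal_sum]
    rw [← Finset.sum_filter_add_sum_filter_not Finset.univ (fun i => i ∈ s)]
    simp only [Finset.filter_univ_mem]
    rw [show (∑ i ∈ Finset.univ.filter (fun i => ¬ i ∈ s),
        (starRingEnd ℂ) (if i ∈ s then c i else 0) * (if i ∈ s then c i else 0)
          * (((hA.eigenvalues i : ℝ) : ℂ) * 1)) = 0 from ?_]
    · rw [add_zero]
      apply Finset.sum_congr rfl
      intro i hi
      rw [if_pos hi, mul_one, ← Complex.normSq_eq_conj_mul_self]
      push_cast
      ring
    · apply Finset.sum_eq_zero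
      intro i hi
      rw [Finset.mem_filter] at hi
      rw [if_neg hi.2]
      ring
  have li : LinearIndependent ℂ u :=
    linearIndependent_of_dots u (fun _ => 1) (fun _ => one_ne_zero) hdots
  have span_finrank : ∀ s : Finset ι,
      Module.finrank ℂ ↥(Submodule.span ℂ (Set.range (u ∘ (Subtype.val : {x // x ∈ s} → ι)))) = s.card := by
    intro s
    rw [finrank_span_eq_card (li.comp Subtype.val Subtype.val_injective)]
    exact Fintype.card_coe s
  have mem_span_form : ∀ (s : Finset ι) (x : ι → ℂ),
      x ∈ Submodule.span ℂ (Set.range (u ∘ (Subtype.val : {x // x ∈ s} → ι))) →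
      ∃ c : ι → ℂ, (∀ i ∉ s, c i = 0) ∧ x = ∑ i ∈ s, c i • u i := by
    intro s x hx
    rw [Submodule.mem_span_range_iff_exists_fun] at hx
    obtain ⟨c, hc⟩ := hx
    refine ⟨fun i => if h : i ∈ s then c ⟨i, h⟩ else 0, fun i hi => dif_neg hi, ?_⟩
    rw [← hc]
    rw [← Finset.sum_attach s (fun i => (if h : i ∈ s then c ⟨i, h⟩ else 0) • u i)]
    apply Finset.sum_congr rfl
    intro i _
    rw [dif_pos i.2]
    rfl
  -- the two spans
  set P := Submodule.span ℂ (Set.range (u ∘ (Subtype.val : {x // x ∈ Neg} → ι))) with hP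
  set Q := Submodule.span ℂ (Set.range (u ∘ (Subtype.val : {x // x ∈ Negᶜ} → ι))) with hQ
  have hPform : ∀ x ∈ P, x ≠ 0 → star x ⬝ᵥ (A *ᵥ x) < 0 := by
    intro x hx hx0
    obtain ⟨c, hc0, rfl⟩ := mem_span_form Neg x hx
    rw [quadform]
    have hex : ∃ i ∈ Neg, c i ≠ 0 := by
      by_contra hall
      push_neg at hall
      exact hx0 (Finset.sum_eq_zero fun i hi => by rw [hall i hi, zero_smul])
    obtain ⟨i0, hi0, hc⟩ := hex
    have hsum : (∑ i ∈ Neg, Complex.normSq (c i) * hA.eigenvalues i) < 0 := by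
      have : ∀ i ∈ Neg, Complex.normSq (c i) * hA.eigenvalues i ≤ 0 := by
        intro i hi
        rw [hNeg, Finset.mem_filter] at hi
        exact mul_nonpos_of_nonneg_of_nonpos (Complex.normSq_nonneg _) (le_of_lt hi.2)
      have hstrict : Complex.normSq (c i0) * hA.eigenvalues i0 < 0 := by
        rw [hNeg, Finset.mem_filter] at hi0
        exact mul_neg_of_pos_of_neg (Complex.normSq_pos.mpr hc) hi0.2
      calc (∑ i ∈ Neg, Complex.normSq (c i) * hA.eigenvalues i)
          < ∑ i ∈ Neg, (0:ℝ) := Finset.sum_lt_sum this ⟨i0, hi0, hstrict⟩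
        _ = 0 := by simp
    rw [show ((0:ℂ) = ((0:ℝ):ℂ)) by norm_num, Complex.real_lt_real]
    exact hsum
  have hQform : ∀ x ∈ Q, 0 ≤ star x ⬝ᵥ (A *ᵥ x) := by
    intro x hx
    obtain ⟨c, hc0, rfl⟩ := mem_span_form Negᶜ x hx
    rw [quadform]
    rw [show ((0:ℂ) = ((0:ℝ):ℂ)) by norm_num, Complex.real_le_real]
    apply Finset.sum_nonneg
    intro i hi
    rw [Finset.mem_compl, hNeg, Finset.mem_filter] at hi
    apply mul_nonneg (Complex.normSq_nonneg _)
    by_contra hlt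
    push_neg at hlt
    exact hi ⟨Finset.mem_univ i, hlt⟩
  have hPW : P ⊓ W = ⊥ := by
    rw [Submodule.eq_bot_iff]
    intro x hx
    by_contra hx0
    exact absurd ((hW x (Submodule.mem_inf.mp hx).2).trans_lt
      (hPform x (Submodule.mem_inf.mp hx).1 hx0)) (lt_irrefl 0)
  have hVQ : V ⊓ Q = ⊥ := by
    rw [Submodule.eq_bot_iff]
    intro x hx
    by_contra hx0
    exact absurd ((hQform x (Submodule.mem_inf.mp hx).2).trans_lt
      (hV x (Submodule.mem_inf.mp hx).1 hx0)) (lt_irrefl 0)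
  have hrank : Module.finrank ℂ (ι → ℂ) = Fintype.card ι := Module.finrank_pi ℂ
  have b1 : Neg.card + Module.finrank ℂ ↥W ≤ Fintype.card ι := by
    have := Submodule.finrank_sup_add_finrank_inf_eq P W
    rw [hPW, finrank_bot, add_zero] at this
    rw [← span_finrank Neg, ← hP, ← this]
    rw [← hrank]
    exact Submodule.finrank_le _
  have b2 : Module.finrank ℂ ↥V + (Fintype.card ι - Neg.card) ≤ Fintype.card ι := by
    have := Submodule.finrank_sup_add_finrank_inf_eq V Q
    rw [hVQ, finrank_bot, add_zero] at this
    have hQr : Module.finrank ℂ ↥Q = Fintype.card ι - Neg.card := by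
      rw [hQ, span_finrank Negᶜ, Finset.card_compl]
    rw [← hQr, ← this, ← hrank]
    exact Submodule.finrank_le _
  have hNegle : Neg.card ≤ Fintype.card ι := Finset.card_le_univ _
  omega

end Inertia

section Construction

/-- the moment sequence -/
def aseq (m k : ℕ) : ℝ := ∑ p ∈ Finset.range m, ((p : ℝ) + 1) ^ (2 * k)

lemma aseq_pos {m : ℕ} (hm : 0 < m) (k : ℕ) : 0 < aseq m k := by
  apply Finset.sum_pos
  · intro p _
    positivity
  · exact ⟨0, Finset.mem_range.mpr hm⟩

def gvec (m n : ℕ) (q : Fin m × Fin (m + n - 1)) : Fin m × Fin n → ℂ := fun x =>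
  if (x.1 : ℕ) + n = (x.2 : ℕ) + (q.2 : ℕ) + 1
    then (((((q.1 : ℕ) : ℝ) + 1) ^ ((x.1 : ℕ) + (x.2 : ℕ)) : ℝ) : ℂ) else 0

def Mmat (m n : ℕ) : Matrix (Fin m × Fin n) (Fin m × Fin n) ℂ := Matrix.of fun x y =>
  if (x.1 : ℕ) + (y.2 : ℕ) = (y.1 : ℕ) + (x.2 : ℕ)
    then ((aseq m ((x.1 : ℕ) + (y.2 : ℕ)) : ℝ) : ℂ) else 0

def Smat (m n : ℕ) : Matrix (Fin m × Fin n) (Fin m × Fin n) ℂ := Matrix.of fun x y =>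
  if (x.1 : ℕ) + (x.2 : ℕ) = (y.1 : ℕ) + (y.2 : ℕ)
    then ((aseq m ((x.1 : ℕ) + (x.2 : ℕ)) : ℝ) : ℂ) else 0

def hvec (m n l : ℕ) : Fin m × Fin n → ℂ := fun x =>
  if (x.1 : ℕ) + (x.2 : ℕ) = l then 1 else 0

def Nant (m n l : ℕ) : ℕ :=
  (Finset.univ.filter fun z : Fin m × Fin n => (z.1 : ℕ) + (z.2 : ℕ) = l).card

lemma gvec_conj (m n : ℕ) (q : Fin m × Fin (m + n - 1)) (x : Fin m × Fin n) :
    (starRingEnd ℂ) (gvec m n q x) = gvec m n q x := by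
  unfold gvec
  split
  · exact Complex.conj_ofReal _
  · exact map_zero _

lemma Mmat_eq_gram {m n : ℕ} (hm : 2 ≤ m) (hn : 2 ≤ n) :
    Mmat m n = Matrix.of fun x y => ∑ q : Fin m × Fin (m + n - 1),
      gvec m n q x * (starRingEnd ℂ) (gvec m n q y) := by
  ext x y
  obtain ⟨i, α⟩ := x
  obtain ⟨j, β⟩ := y
  have hi := i.isLt
  have hj := j.isLt
  have hα := α.isLt
  have hβ := β.isLt
  unfold Mmat
  rw [Matrix.of_apply, Matrix.of_apply]
  simp only []
  rw [Fintype.sum_prod_type]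
  have inner : ∀ p : Fin m,
      (∑ t : Fin (m + n - 1), gvec m n (p, t) (i, α) * (starRingEnd ℂ) (gvec m n (p, t) (j, β)))
      = if (i : ℕ) + (β : ℕ) = (j : ℕ) + (α : ℕ)
          then (((((p : ℕ) : ℝ) + 1) ^ ((i : ℕ) + (α : ℕ) + ((j : ℕ) + (β : ℕ))) : ℝ) : ℂ)
          else 0 := by
    intro p
    have ht0b : (i : ℕ) + n - 1 - (α : ℕ) < m + n - 1 := by omega
    set t0 : Fin (m + n - 1) := ⟨(i : ℕ) + n - 1 - (α : ℕ), ht0b⟩ with ht0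
    have ht0v : (t0 : ℕ) = (i : ℕ) + n - 1 - (α : ℕ) := rfl
    by_cases h : (i : ℕ) + (β : ℕ) = (j : ℕ) + (α : ℕ)
    · rw [if_pos h]
      rw [Finset.sum_eq_single t0]
      · rw [gvec_conj]
        unfold gvec
        rw [if_pos (show (i : ℕ) + n = (α : ℕ) + (t0 : ℕ) + 1 by omega)]
        rw [if_pos (show (j : ℕ) + n = (β : ℕ) + (t0 : ℕ) + 1 by omega)]
        rw [← Complex.ofReal_mul, ← pow_add]
      · intro t _ ht
        rw [gvec_conj]
        unfold gvec
        by_cases hc : (i : ℕ) + n = (α : ℕ) + (t : ℕ) + 1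
        · exact absurd (Fin.ext (show (t : ℕ) = (t0 : ℕ) by omega)) ht
        · rw [if_neg (show ¬ ((i : ℕ) + n = (α : ℕ) + (t : ℕ) + 1) from hc)]
          exact zero_mul _
      · intro habs
        exact absurd (Finset.mem_univ _) habs
    · rw [if_neg h]
      apply Finset.sum_eq_zero
      intro t _
      rw [gvec_conj]
      unfold gvec
      by_cases hc : (i : ℕ) + n = (α : ℕ) + (t : ℕ) + 1
      · rw [if_neg (show ¬ ((j : ℕ) + n = (β : ℕ) + (t : ℕ) + 1) by omega)]
        exact mul_zero _
      · rw [if_neg (show ¬ ((i : ℕ) + n = (α : ℕ) + (t : ℕ) + 1) from hc)]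
        exact zero_mul _
  rw [Finset.sum_congr rfl (fun p _ => inner p)]
  by_cases h : (i : ℕ) + (β : ℕ) = (j : ℕ) + (α : ℕ)
  · rw [if_pos h]
    simp only [if_pos h]
    rw [← Complex.ofReal_sum]
    congr 1
    have hexp : (i : ℕ) + (α : ℕ) + ((j : ℕ) + (β : ℕ)) = 2 * ((i : ℕ) + (β : ℕ)) := by omega
    rw [hexp, aseq, Finset.sum_range (fun p => ((p : ℝ) + 1) ^ (2 * ((i : ℕ) + (β : ℕ))))]
  · rw [if_neg h]
    simp only [if_neg h]
    exact (Finset.sum_const_zero).symm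

lemma Mmat_posDef {m n : ℕ} (hm : 2 ≤ m) (hn : 2 ≤ n) : (Mmat m n).PosDef := by
  rw [Mmat_eq_gram hm hn]
  apply posDef_gram
  intro x hx
  funext z0
  obtain ⟨i0, α0⟩ := z0
  have hi0 := i0.isLt
  have hα0 := α0.isLt
  have ht0b : (i0 : ℕ) + n - 1 - (α0 : ℕ) < m + n - 1 := by omega
  set t0 : Fin (m + n - 1) := ⟨(i0 : ℕ) + n - 1 - (α0 : ℕ), ht0b⟩ with ht0def
  have ht0v : (t0 : ℕ) = (i0 : ℕ) + n - 1 - (α0 : ℕ) := rfl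
  set D : Finset (Fin m × Fin n) :=
    Finset.univ.filter (fun z => (z.1 : ℕ) + n = (z.2 : ℕ) + (t0 : ℕ) + 1) with hD
  set q : Polynomial ℂ := ∑ z ∈ D, Polynomial.C (x z) * Polynomial.X ^ (z.1 : ℕ) with hq
  have heval : ∀ p : Fin m, q.eval (((((p : ℕ) : ℂ)) + 1) ^ 2) = 0 := by
    intro p
    set w : ℂ := ((p : ℕ) : ℂ) + 1 with hw
    have hw0 : w ≠ 0 := by
      rw [hw]
      intro hcon
      have : ((p : ℕ) : ℂ) = -1 := by linear_combination hcon
      have h2 : (0:ℝ) ≤ ((p : ℕ) : ℝ) := Nat.cast_nonneg _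
      rw [show ((-1 : ℂ)) = (((-1 : ℝ)) : ℂ) by norm_num] at this
      rw [show (((p : ℕ) : ℂ)) = ((((p:ℕ) : ℝ)) : ℂ) by push_cast; ring] at this
      have := Complex.ofReal_injective this
      linarith
    have hdot := hx (p, t0)
    have ha : ∀ z : Fin m × Fin n, star (gvec m n (p, t0)) z * x z
        = if (z.1 : ℕ) + n = (z.2 : ℕ) + (t0 : ℕ) + 1
            then (w ^ ((z.1 : ℕ) + (z.2 : ℕ))) * x z else 0 := by
      intro z
      rw [Pi.star_apply, RCLike.star_def, gvec_conj]
      unfold gvec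
      split
      · congr 1
        rw [hw]
        push_cast
        ring
      · exact zero_mul _
    have hdot' : ∑ z ∈ D, (w ^ ((z.1 : ℕ) + (z.2 : ℕ))) * x z = 0 := by
      rw [hD, Finset.sum_filter, ← Finset.sum_congr rfl (fun z _ => ha z)]
      exact hdot
    have hterm : ∀ z ∈ D, x z * (w ^ 2) ^ (z.1 : ℕ) * w ^ n
        = (w ^ ((z.1 : ℕ) + (z.2 : ℕ)) * x z) * w ^ ((t0 : ℕ) + 1) := by
      intro z hz
      rw [hD, Finset.mem_filter] at hz
      have hzc := hz.2
      have hpow : w ^ (2 * (z.1 : ℕ)) * w ^ n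
          = w ^ ((z.1 : ℕ) + (z.2 : ℕ)) * w ^ ((t0 : ℕ) + 1) := by
        rw [← pow_add, ← pow_add]
        congr 1
        omega
      rw [← pow_mul]
      linear_combination x z * hpow
    have hsum : (q.eval (w ^ 2)) * w ^ n = 0 := by
      have he1 : q.eval (w ^ 2) = ∑ z ∈ D, x z * (w ^ 2) ^ (z.1 : ℕ) := by
        rw [hq, Polynomial.eval_finset_sum]
        apply Finset.sum_congr rfl
        intro z _
        rw [Polynomial.eval_mul, Polynomial.eval_C, Polynomial.eval_pow, Polynomial.eval_X]
      rw [he1, Finset.sum_mul, Finset.sum_congr rfl hterm, ← Finset.sum_mul, hdot', zero_mul]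
    rcases mul_eq_zero.mp hsum with h' | h'
    · exact h'
    · exact absurd h' (pow_ne_zero _ hw0)
  have hq0 : q = 0 := by
    apply Polynomial.eq_zero_of_natDegree_lt_card_of_eval_eq_zero q
      (f := fun p : Fin m => ((((p : ℕ) : ℂ)) + 1) ^ 2)
    · intro p p' hpp
      have h1 : (((p : ℕ) + 1 : ℕ) : ℂ) ^ 2 = (((p' : ℕ) + 1 : ℕ) : ℂ) ^ 2 := by
        push_cast
        exact hpp
      rw [← Nat.cast_pow, ← Nat.cast_pow] at h1
      have h2 : ((p : ℕ) + 1) ^ 2 = ((p' : ℕ) + 1) ^ 2 := Nat.cast_injective h1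
      have h3 := Nat.pow_left_injective (two_ne_zero) h2
      exact Fin.ext (by omega)
    · exact heval
    · rw [Fintype.card_fin]
      have : q.natDegree ≤ m - 1 := by
        rw [hq]
        apply Polynomial.natDegree_sum_le_of_forall_le
        intro z _
        refine le_trans (Polynomial.natDegree_C_mul_le _ _) ?_
        rw [Polynomial.natDegree_X_pow]
        have := z.1.isLt
        omega
      omega
  have hcoeff : q.coeff (i0 : ℕ) = x (i0, α0) := by
    rw [hq, Polynomial.finset_sum_coeff]
    rw [Finset.sum_eq_single ((i0, α0) : Fin m × Fin n)]
    · rw [Polynomial.coeff_C_mul_X_pow, if_pos rfl]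
    · intro z hz hne
      rw [Polynomial.coeff_C_mul_X_pow]
      rw [if_neg ?_]
      intro hvaleq
      rw [hD, Finset.mem_filter] at hz
      apply hne
      obtain ⟨z1, z2⟩ := z
      have hcond := hz.2
      simp only [] at hcond hvaleq
      have hz1 : z1 = i0 := Fin.ext (by omega)
      have hz2 : z2 = α0 := Fin.ext (by omega)
      rw [hz1, hz2]
    · intro hnotin
      exfalso
      apply hnotin
      rw [hD, Finset.mem_filter]
      exact ⟨Finset.mem_univ _, by simp only []; omega⟩
  rw [hq0, Polynomial.coeff_zero] at hcoeff
  exact hcoeff.symm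

lemma hvec_star (m n l : ℕ) : star (hvec m n l) = hvec m n l := by
  funext z
  rw [Pi.star_apply]
  unfold hvec
  split
  · exact star_one _
  · exact star_zero _

lemma hvec_dot (m n l l' : ℕ) :
    hvec m n l ⬝ᵥ hvec m n l' = if l = l' then ((Nant m n l : ℕ) : ℂ) else 0 := by
  unfold dotProduct
  by_cases h : l = l'
  · subst h
    rw [if_pos rfl, Nant, Finset.card_filter, Nat.cast_sum]
    apply Finset.sum_congr rfl
    intro z _
    unfold hvec
    by_cases hc : (z.1 : ℕ) + (z.2 : ℕ) = l
    · rw [if_pos hc, if_pos hc]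
      norm_num
    · rw [if_neg hc, if_neg hc]
      norm_num
  · rw [if_neg h]
    apply Finset.sum_eq_zero
    intro z _
    unfold hvec
    by_cases hc : (z.1 : ℕ) + (z.2 : ℕ) = l
    · rw [if_pos hc, if_neg (show ¬ ((z.1 : ℕ) + (z.2 : ℕ) = l') by omega), mul_zero]
    · rw [if_neg hc, zero_mul]

lemma Nant_pos {m n : ℕ} (hm : 2 ≤ m) (hn : 2 ≤ n) {l : ℕ} (hl : l < m + n - 1) :
    0 < Nant m n l := by
  rw [Nant, Finset.card_pos]
  refine ⟨(⟨min l (m - 1), by omega⟩, ⟨l - min l (m - 1), by omega⟩), ?_⟩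
  rw [Finset.mem_filter]
  refine ⟨Finset.mem_univ _, ?_⟩
  show min l (m - 1) + (l - min l (m - 1)) = l
  omega

lemma Smat_mulVec_hvec {m n : ℕ} (l : ℕ) :
    Smat m n *ᵥ hvec m n l
      = (((aseq m l * (Nant m n l : ℕ)) : ℝ) : ℂ) • hvec m n l := by
  funext z
  rw [Matrix.mulVec, dotProduct, Pi.smul_apply]
  by_cases hz : (z.1 : ℕ) + (z.2 : ℕ) = l
  · have hterm : ∀ w : Fin m × Fin n, Smat m n z w * hvec m n l w
        = if (w.1 : ℕ) + (w.2 : ℕ) = l then ((aseq m l : ℝ) : ℂ) else 0 := by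
      intro w
      unfold Smat hvec
      rw [Matrix.of_apply]
      by_cases hw : (w.1 : ℕ) + (w.2 : ℕ) = l
      · rw [if_pos hw, if_pos hw, if_pos (show (z.1 : ℕ) + (z.2 : ℕ) = (w.1 : ℕ) + (w.2 : ℕ) by omega),
          mul_one, hz]
      · rw [if_neg hw, if_neg hw, mul_zero]
    rw [Finset.sum_congr rfl (fun w _ => hterm w), ← Finset.sum_filter, Finset.sum_const,
      nsmul_eq_mul]
    unfold hvec
    rw [if_pos hz, smul_eq_mul, mul_one, ← Nant]
    push_cast
    ring
  · have hterm : ∀ w : Fin m × Fin n, Smat m n z w * hvec m n l w = 0 := by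
      intro w
      unfold Smat hvec
      rw [Matrix.of_apply]
      by_cases hw : (w.1 : ℕ) + (w.2 : ℕ) = l
      · rw [if_neg (show ¬ ((z.1 : ℕ) + (z.2 : ℕ) = (w.1 : ℕ) + (w.2 : ℕ)) by omega), zero_mul]
      · rw [if_neg hw, mul_zero]
    rw [Finset.sum_congr rfl (fun w _ => hterm w), Finset.sum_const_zero]
    unfold hvec
    rw [if_neg hz, smul_eq_mul, mul_zero]

lemma Smat_mulVec_ker {m n : ℕ} (x : Fin m × Fin n → ℂ)
    (hx : ∀ l : ℕ, l < m + n - 1 → hvec m n l ⬝ᵥ x = 0) :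
    Smat m n *ᵥ x = 0 := by
  funext z
  have h1 := z.1.isLt
  have h2 := z.2.isLt
  have hzl : (z.1 : ℕ) + (z.2 : ℕ) < m + n - 1 := by omega
  rw [Matrix.mulVec, dotProduct, Pi.zero_apply]
  have hterm : ∀ w : Fin m × Fin n, Smat m n z w * x w
      = ((aseq m ((z.1 : ℕ) + (z.2 : ℕ)) : ℝ) : ℂ)
          * (hvec m n ((z.1 : ℕ) + (z.2 : ℕ)) w * x w) := by
    intro w
    unfold Smat hvec
    rw [Matrix.of_apply]
    by_cases hw : (z.1 : ℕ) + (z.2 : ℕ) = (w.1 : ℕ) + (w.2 : ℕ)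
    · rw [if_pos hw, if_pos (show (w.1 : ℕ) + (w.2 : ℕ) = (z.1 : ℕ) + (z.2 : ℕ) by omega)]
      ring
    · rw [if_neg hw, if_neg (show ¬ ((w.1 : ℕ) + (w.2 : ℕ) = (z.1 : ℕ) + (z.2 : ℕ)) by omega)]
      ring
  rw [Finset.sum_congr rfl (fun w _ => hterm w), ← Finset.mul_sum]
  rw [show (∑ w, hvec m n ((z.1 : ℕ) + (z.2 : ℕ)) w * x w)
      = hvec m n ((z.1 : ℕ) + (z.2 : ℕ)) ⬝ᵥ x from rfl]
  rw [hx _ hzl, mul_zero]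

lemma diag_entry_nonneg {ι : Type*} [Fintype ι] [DecidableEq ι] {A : Matrix ι ι ℂ}
    (hA : A.PosSemidef) (z : ι) : 0 ≤ A z z := by
  have h := hA.dotProduct_mulVec_nonneg ((Pi.single z 1 : ι → ℂ))
  have hstar : star ((Pi.single z 1 : ι → ℂ)) = (Pi.single z 1 : ι → ℂ) := by
    funext w
    rw [Pi.star_apply]
    by_cases hw : w = z
    · subst hw
      simp
    · simp [Pi.single_eq_of_ne hw]
  have h1 : star ((Pi.single z 1 : ι → ℂ)) ⬝ᵥ (A *ᵥ (Pi.single z 1 : ι → ℂ)) = A z z := by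
    rw [hstar, single_dotProduct, one_mul]
    show (fun j => A z j) ⬝ᵥ Pi.single z 1 = A z z
    rw [dotProduct_single, mul_one]
  rwa [h1] at h

lemma psd_real_smul {ι : Type*} [Fintype ι] {A : Matrix ι ι ℂ} (hA : A.PosSemidef)
    {c : ℝ} (hc : 0 ≤ c) : (((c : ℝ) : ℂ) • A).PosSemidef := by
  refine Matrix.PosSemidef.of_dotProduct_mulVec_nonneg ?_ ?_
  · show (((c : ℝ) : ℂ) • A)ᴴ = _
    rw [Matrix.conjTranspose_smul, hA.1.eq]
    congr 1
    exact Complex.conj_ofReal c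
  · intro x
    rw [Matrix.smul_mulVec, dotProduct_smul]
    have h2 : (0 : ℂ) ≤ ((c : ℝ) : ℂ) := by
      rw [show ((0 : ℂ)) = (((0 : ℝ)) : ℂ) by norm_num, Complex.real_le_real]
      exact hc
    exact mul_nonneg h2 (hA.dotProduct_mulVec_nonneg x)

end Construction

end Stmt18

open Stmt18

set_option maxHeartbeats 3000000 in
theorem stmt_18 (m n : ℕ) (hm : 2 ≤ m) (hn : 2 ≤ n) :
    ∃ ρ : Matrix (Fin m × Fin n) (Fin m × Fin n) ℂ,
      ρ.PosSemidef ∧ ρ.trace = 1 ∧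
      ∃ hΓ : (ptranspose ρ).IsHermitian,
        (Finset.univ.filter fun i => hΓ.eigenvalues i < 0).card
          = (m - 1) * (n - 1) := by
  haveI : Nonempty (Fin m × Fin n) := ⟨(⟨0, by omega⟩, ⟨0, by omega⟩)⟩
  obtain ⟨ε, hε, hMε⟩ := Stmt18.exists_eps (Stmt18.Mmat_posDef hm hn)
  -- diagonal bound
  have hdiagM : ∀ z : Fin m × Fin n, ε ≤ Stmt18.aseq m ((z.1 : ℕ) + (z.2 : ℕ)) := by
    intro z
    have h0 := diag_entry_nonneg hMε z
    have h1 : (Stmt18.Mmat m n - (ε : ℂ) • 1) z z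
        = ((Stmt18.aseq m ((z.1 : ℕ) + (z.2 : ℕ)) - ε : ℝ) : ℂ) := by
      rw [Matrix.sub_apply, Matrix.smul_apply, Matrix.one_apply_eq, smul_eq_mul, mul_one]
      unfold Stmt18.Mmat
      rw [Matrix.of_apply, if_pos rfl]
      push_cast
      ring
    rw [h1, show ((0 : ℂ)) = (((0 : ℝ)) : ℂ) by norm_num, Complex.real_le_real] at h0
    linarith
  have haε : ∀ l : ℕ, l < m + n - 1 → ε ≤ Stmt18.aseq m l := by
    intro l hl
    have hz1 : min l (m - 1) < m := by omega
    have hz2 : l - min l (m - 1) < n := by omega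
    have := hdiagM (⟨min l (m - 1), hz1⟩, ⟨l - min l (m - 1), hz2⟩)
    have hsum : ((⟨min l (m - 1), hz1⟩ : Fin m) : ℕ) + ((⟨l - min l (m - 1), hz2⟩ : Fin n) : ℕ) = l := by
      show min l (m - 1) + (l - min l (m - 1)) = l
      omega
    rwa [hsum] at this
  set K := Stmt18.Mmat m n with hK
  set S := Stmt18.Smat m n with hS
  set ρ0 : Matrix (Fin m × Fin n) (Fin m × Fin n) ℂ := K - ((ε / 2 : ℝ) : ℂ) • 1 with hρ0
  have hρ0psd : ρ0.PosSemidef := by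
    have hsplit : ρ0 = (K - (ε : ℂ) • 1) + ((ε / 2 : ℝ) : ℂ) • 1 := by
      have hcoef : ((ε : ℂ)) • (1 : Matrix (Fin m × Fin n) (Fin m × Fin n) ℂ)
          = ((ε / 2 : ℝ) : ℂ) • 1 + ((ε / 2 : ℝ) : ℂ) • 1 := by
        rw [← add_smul]
        congr 1
        push_cast
        ring
      rw [hρ0, hcoef]
      abel
    rw [hsplit]
    apply hMε.add
    have hdiag1 : ((ε / 2 : ℝ) : ℂ) • (1 : Matrix (Fin m × Fin n) (Fin m × Fin n) ℂ)
        = Matrix.diagonal (fun _ => ((ε / 2 : ℝ) : ℂ)) := by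
      ext z w
      by_cases h : z = w
      · subst h
        simp
      · simp [Matrix.one_apply_ne h, Matrix.diagonal_apply_ne _ h]
    rw [hdiag1, Matrix.posSemidef_diagonal_iff]
    intro i
    rw [show ((0 : ℂ)) = (((0 : ℝ)) : ℂ) by norm_num, Complex.real_le_real]
    positivity
  set τ : ℝ := (∑ z : Fin m × Fin n, Stmt18.aseq m ((z.1 : ℕ) + (z.2 : ℕ)))
      - ((m * n : ℕ) : ℝ) * (ε / 2) with hτ
  have htrace0 : ρ0.trace = (τ : ℂ) := by
    rw [hρ0, Matrix.trace_sub, Matrix.trace_smul, Matrix.trace_one]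
    have hdiagK : ∀ z : Fin m × Fin n, K.diag z
        = ((Stmt18.aseq m ((z.1 : ℕ) + (z.2 : ℕ)) : ℝ) : ℂ) := by
      intro z
      show K z z = _
      rw [hK]
      unfold Stmt18.Mmat
      rw [Matrix.of_apply, if_pos rfl]
    rw [Matrix.trace, Finset.sum_congr rfl (fun z _ => hdiagK z), ← Complex.ofReal_sum, hτ]
    simp only [Fintype.card_prod, Fintype.card_fin, smul_eq_mul]
    push_cast
    ring
  have hτpos : 0 < τ := by
    have hsum : ((m * n : ℕ) : ℝ) * ε ≤ ∑ z : Fin m × Fin n, Stmt18.aseq m ((z.1 : ℕ) + (z.2 : ℕ)) := by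
      calc ((m * n : ℕ) : ℝ) * ε = ∑ _z : Fin m × Fin n, ε := by
            rw [Finset.sum_const, Finset.card_univ, Fintype.card_prod, Fintype.card_fin,
              Fintype.card_fin, nsmul_eq_mul]
        _ ≤ _ := Finset.sum_le_sum (fun z _ => hdiagM z)
    have hmn1 : (1 : ℝ) ≤ ((m * n : ℕ) : ℝ) := by
      have : 1 ≤ m * n := Nat.one_le_iff_ne_zero.mpr (by positivity)
      exact_mod_cast this
    rw [hτ]
    nlinarith
  set ρ : Matrix (Fin m × Fin n) (Fin m × Fin n) ℂ := ((τ⁻¹ : ℝ) : ℂ) • ρ0 with hρdef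
  refine ⟨ρ, ?_, ?_, ?_⟩
  · exact psd_real_smul hρ0psd (le_of_lt (inv_pos.mpr hτpos))
  · rw [hρdef, Matrix.trace_smul, smul_eq_mul, htrace0, ← Complex.ofReal_mul,
      inv_mul_cancel₀ (ne_of_gt hτpos)]
    norm_num
  · -- the partial transpose and its negative eigenvalue count
    have hPT : ptranspose ρ = ((τ⁻¹ : ℝ) : ℂ) • (S - ((ε / 2 : ℝ) : ℂ) • 1) := by
      ext x y
      show ρ (x.1, y.2) (y.1, x.2) = _
      have hKS : K (x.1, y.2) (y.1, x.2) = S x y := rfl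
      have h1e : (1 : Matrix (Fin m × Fin n) (Fin m × Fin n) ℂ) (x.1, y.2) (y.1, x.2)
          = (1 : Matrix (Fin m × Fin n) (Fin m × Fin n) ℂ) x y := by
        by_cases h : x = y
        · subst h
          rfl
        · have hne : ((x.1, y.2) : Fin m × Fin n) ≠ (y.1, x.2) := by
            intro hc
            rw [Prod.mk.injEq] at hc
            apply h
            obtain ⟨x1, x2⟩ := x
            obtain ⟨y1, y2⟩ := y
            rw [Prod.mk.injEq]
            exact ⟨hc.1, hc.2.symm⟩
          rw [Matrix.one_apply_ne hne, Matrix.one_apply_ne h]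
      rw [hρdef, Matrix.smul_apply, Matrix.smul_apply, hρ0, Matrix.sub_apply, Matrix.sub_apply,
        Matrix.smul_apply, Matrix.smul_apply, hKS, h1e]
    have hSherm : (S - ((ε / 2 : ℝ) : ℂ) • 1).IsHermitian := by
      have h1 : S.IsHermitian := by
        show Sᴴ = S
        ext x y
        rw [Matrix.conjTranspose_apply, hS]
        unfold Stmt18.Smat
        rw [Matrix.of_apply, Matrix.of_apply]
        by_cases h : (y.1 : ℕ) + (y.2 : ℕ) = (x.1 : ℕ) + (x.2 : ℕ)
        · rw [if_pos h, if_pos (show (x.1 : ℕ) + (x.2 : ℕ) = (y.1 : ℕ) + (y.2 : ℕ) by omega),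
            RCLike.star_def, Complex.conj_ofReal]
          congr 2 <;> omega
        · rw [if_neg h,
            if_neg (show ¬ ((x.1 : ℕ) + (x.2 : ℕ) = (y.1 : ℕ) + (y.2 : ℕ)) by omega), star_zero]
      have h2 : (((ε / 2 : ℝ) : ℂ) • (1 : Matrix (Fin m × Fin n) (Fin m × Fin n) ℂ)).IsHermitian := by
        show _ᴴ = _
        rw [Matrix.conjTranspose_smul, Matrix.conjTranspose_one]
        congr 1
        exact Complex.conj_ofReal _
      exact h1.sub h2
    have hΓ : (ptranspose ρ).IsHermitian := by
      rw [hPT]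
      show _ᴴ = _
      rw [Matrix.conjTranspose_smul, hSherm.eq]
      congr 1
      exact Complex.conj_ofReal _
    refine ⟨hΓ, ?_⟩
    -- eigenvector family
    set v : Fin (m + n - 1) → (Fin m × Fin n → ℂ) := fun l => Stmt18.hvec m n (l : ℕ) with hv
    have hNpos : ∀ l : Fin (m + n - 1), 0 < Stmt18.Nant m n (l : ℕ) :=
      fun l => Stmt18.Nant_pos hm hn l.isLt
    have hvdots : ∀ l l' : Fin (m + n - 1),
        star (v l) ⬝ᵥ v l' = if l = l' then ((Stmt18.Nant m n (l : ℕ) : ℕ) : ℂ) else 0 := by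
      intro l l'
      rw [hv]
      show star (Stmt18.hvec m n (l : ℕ)) ⬝ᵥ Stmt18.hvec m n (l' : ℕ) = _
      rw [Stmt18.hvec_star, Stmt18.hvec_dot]
      by_cases h : l = l'
      · rw [if_pos (by rw [h]), if_pos h]
      · rw [if_neg (fun hc => h (Fin.ext hc)), if_neg h]
    have hvdots' : ∀ l l' : Fin (m + n - 1),
        v l ⬝ᵥ v l' = if l = l' then ((Stmt18.Nant m n (l : ℕ) : ℕ) : ℂ) else 0 := by
      intro l l'
      rw [← hvdots l l', hv]
      show Stmt18.hvec m n (l : ℕ) ⬝ᵥ _ = star (Stmt18.hvec m n (l : ℕ)) ⬝ᵥ _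
      rw [Stmt18.hvec_star]
    have hμ : ∀ l : Fin (m + n - 1), (ptranspose ρ) *ᵥ v l
        = ((τ⁻¹ * (Stmt18.aseq m (l : ℕ) * ((Stmt18.Nant m n (l : ℕ) : ℕ) : ℝ) - ε / 2) : ℝ) : ℂ)
            • v l := by
      intro l
      rw [hPT, Matrix.smul_mulVec, Matrix.sub_mulVec, Matrix.smul_mulVec,
        Matrix.one_mulVec, hv]
      show _ • (Stmt18.Smat m n *ᵥ Stmt18.hvec m n (l : ℕ) - _) = _
      rw [Stmt18.Smat_mulVec_hvec]
      funext z
      simp only [Pi.smul_apply, Pi.sub_apply, smul_eq_mul]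
      push_cast
      ring
    set Hmt : Matrix (Fin (m + n - 1)) (Fin m × Fin n) ℂ := Matrix.of (fun l z => v l z) with hHmt
    set Φ := Hmt.mulVecLin with hΦ
    set V := LinearMap.ker Φ with hVdef
    set W := Submodule.span ℂ (Set.range v) with hWdef
    have hΦapp : ∀ (x : Fin m × Fin n → ℂ) (l : Fin (m + n - 1)), Φ x l = v l ⬝ᵥ x := by
      intro x l
      rfl
    have hsurj : Function.Surjective Φ := by
      intro y
      refine ⟨∑ l, (y l / ((Stmt18.Nant m n (l : ℕ) : ℕ) : ℂ)) • v l, ?_⟩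
      funext l'
      rw [hΦapp]
      rw [show (∑ l, (y l / ((Stmt18.Nant m n (l : ℕ) : ℕ) : ℂ)) • v l)
          = ∑ l, (fun l => (y l / ((Stmt18.Nant m n (l : ℕ) : ℕ) : ℂ)) • v l) l from rfl]
      rw [Stmt18.dotProduct_sum']
      simp only [dotProduct_smul, hvdots', smul_eq_mul, mul_ite, mul_zero]
      rw [Finset.sum_ite_eq Finset.univ l'
        (fun l => y l / ((Stmt18.Nant m n (l : ℕ) : ℕ) : ℂ) * ((Stmt18.Nant m n (l' : ℕ) : ℕ) : ℂ))]
      rw [if_pos (Finset.mem_univ _)]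
      rw [div_mul_cancel₀]
      exact Nat.cast_ne_zero.mpr (Nat.pos_iff_ne_zero.mp (hNpos l'))
    have hVdim : Module.finrank ℂ ↥V = m * n - (m + n - 1) := by
      have h1 := LinearMap.finrank_range_add_finrank_ker Φ
      rw [LinearMap.range_eq_top.mpr hsurj, finrank_top, Module.finrank_pi, Module.finrank_pi,
        Fintype.card_fin, Fintype.card_prod, Fintype.card_fin, Fintype.card_fin] at h1
      rw [← hVdef] at h1
      generalize hgen : m * n = MN at h1 ⊢
      omega
    have hWli : LinearIndependent ℂ v :=
      Stmt18.linearIndependent_of_dots v (fun l => ((Stmt18.Nant m n (l : ℕ) : ℕ) : ℂ))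
        (fun l => Nat.cast_ne_zero.mpr (Nat.pos_iff_ne_zero.mp (hNpos l))) hvdots
    have hWdim : Module.finrank ℂ ↥W = m + n - 1 := by
      rw [hWdef, finrank_span_eq_card hWli, Fintype.card_fin]
    have hMNle : m + n ≤ m * n := Nat.add_le_mul hm hn
    have hdim : Module.finrank ℂ ↥V + Module.finrank ℂ ↥W = Fintype.card (Fin m × Fin n) := by
      rw [hVdim, hWdim, Fintype.card_prod, Fintype.card_fin, Fintype.card_fin]
      generalize hgen : m * n = MN at hMNle ⊢
      omega
    have hVform : ∀ x ∈ V, x ≠ 0 → star x ⬝ᵥ ((ptranspose ρ) *ᵥ x) < 0 := by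
      intro x hx hx0
      have hker : Hmt *ᵥ x = 0 := LinearMap.mem_ker.mp hx
      have hdots0 : ∀ l : ℕ, l < m + n - 1 → Stmt18.hvec m n l ⬝ᵥ x = 0 := by
        intro l hl
        have h3 := congrFun hker ⟨l, hl⟩
        exact h3
      have hS0 : S *ᵥ x = 0 := by
        rw [hS]
        exact Stmt18.Smat_mulVec_ker x hdots0
      have hAx : (ptranspose ρ) *ᵥ x = (((-(τ⁻¹ * (ε / 2))) : ℝ) : ℂ) • x := by
        rw [hPT, Matrix.smul_mulVec, Matrix.sub_mulVec, Matrix.smul_mulVec,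
          Matrix.one_mulVec, hS0]
        funext z
        simp only [Pi.smul_apply, Pi.sub_apply, Pi.zero_apply, smul_eq_mul]
        push_cast
        ring
      rw [hAx, dotProduct_smul]
      have hpos : 0 < star x ⬝ᵥ x := dotProduct_star_self_pos_iff.mpr hx0
      have hneg : (-(τ⁻¹ * (ε / 2)) : ℝ) < 0 := by
        have h4 : 0 < τ⁻¹ := inv_pos.mpr hτpos
        nlinarith
      have h5 := Stmt18.real_neg_mul_pos hneg hpos
      rwa [smul_eq_mul]
    have hWform : ∀ x ∈ W, 0 ≤ star x ⬝ᵥ ((ptranspose ρ) *ᵥ x) := by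
      intro x hxW
      rw [hWdef, Submodule.mem_span_range_iff_exists_fun] at hxW
      obtain ⟨c, rfl⟩ := hxW
      rw [Stmt18.quad_sum (ptranspose ρ) v
        (fun l => ((τ⁻¹ * (Stmt18.aseq m (l : ℕ) * ((Stmt18.Nant m n (l : ℕ) : ℕ) : ℝ) - ε / 2) : ℝ) : ℂ))
        (fun l => ((Stmt18.Nant m n (l : ℕ) : ℕ) : ℂ)) hμ hvdots c]
      apply Finset.sum_nonneg
      intro l _
      have h1 : (starRingEnd ℂ) (c l) * c l = ((Complex.normSq (c l) : ℝ) : ℂ) := by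
        rw [← Complex.normSq_eq_conj_mul_self]
      rw [h1]
      have hNc : ((Stmt18.Nant m n (l : ℕ) : ℕ) : ℂ) = (((Stmt18.Nant m n (l : ℕ) : ℕ) : ℝ) : ℂ) := by
        push_cast
        ring
      rw [hNc, ← Complex.ofReal_mul, ← Complex.ofReal_mul]
      rw [show ((0 : ℂ)) = (((0 : ℝ)) : ℂ) by norm_num, Complex.real_le_real]
      have hτi : 0 < τ⁻¹ := inv_pos.mpr hτpos
      have hNl : (1 : ℝ) ≤ ((Stmt18.Nant m n (l : ℕ) : ℕ) : ℝ) := by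
        exact_mod_cast hNpos l
      have hal : ε ≤ Stmt18.aseq m (l : ℕ) := haε _ l.isLt
      have hfac : 0 ≤ τ⁻¹ * (Stmt18.aseq m (l : ℕ) * ((Stmt18.Nant m n (l : ℕ) : ℕ) : ℝ) - ε / 2) := by
        have : ε ≤ Stmt18.aseq m (l : ℕ) * ((Stmt18.Nant m n (l : ℕ) : ℕ) : ℝ) := by
          nlinarith
        nlinarith
      have hnsq : 0 ≤ Complex.normSq (c l) := Complex.normSq_nonneg _
      exact mul_nonneg hnsq (mul_nonneg hfac (by linarith))
    have hcount := Stmt18.inertia hΓ V W hdim hVform hWform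
    rw [hcount, hVdim]
    obtain ⟨m', rfl⟩ : ∃ m', m = m' + 2 := ⟨m - 2, by omega⟩
    obtain ⟨n', rfl⟩ : ∃ n', n = n' + 2 := ⟨n - 2, by omega⟩
    have e1 : (m' + 2) * (n' + 2) = m' * n' + 2 * m' + 2 * n' + 4 := by ring
    have e2 : (m' + 2 - 1) * (n' + 2 - 1) = m' * n' + m' + n' + 1 := by
      have ha : m' + 2 - 1 = m' + 1 := by omega
      have hb : n' + 2 - 1 = n' + 1 := by omega
      rw [ha, hb]
      ring
    rw [e1, e2]
    generalize hP : m' * n' = P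
    omega
end
end
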